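/- arXiv:math/0311205 — 7 statements merged into one kernel-verified Lean document; each statement's English description precedes it below -/
import Mathlib

section
/- Let j ≥ 0 and r ≥ 1 be integers, let α = (1+√5)/2, β = (1−√5)/2, let F_n denote the Fibonacci numbers and L_n the Lucas numbers. Then F_{j+1}^{(r)} = Σ_{k=0, r+k ≡ 0 (mod 2)}^{r−1} C(r+k−1, k) · C(r−k+j−1, j) · L_{r−k+j} / 5^{(k+r)/2} + Σ_{k=0, r+k ≡ 1 (mod 2)}^{r−1} C(r+k−1, k) · C(r−k+j−1, j) · F_{r−k+j} / 5^{(k+r−1)/2}, where the equality holds in ℚ. -/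
open Finset PowerSeries Real

/-- `convFib r m` is the convolved Fibonacci number `F_{m+1}^{(r)}`, the coefficient of
`z^m` in `(1 - z - z^2)^{-r}`, given by `∑_{j_1+⋯+j_r=m} F_{j_1+1}⋯F_{j_r+1}`. -/
def convFib (r m : ℕ) : ℕ :=
  ∑ t ∈ Finset.Nat.antidiagonalTuple r m, ∏ i, Nat.fib (t i + 1)

/-- The Lucas numbers: `L_0 = 2`, `L_1 = 1`, `L_{n+2} = L_{n+1} + L_n`. -/
def lucas : ℕ → ℕ
  | 0 => 2
  | 1 => 1
  | n + 2 => lucas (n + 1) + lucas n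

section Aux

lemma pascal_cast {R : Type*} [CommRing R] (a b : ℕ) :
    ((a+1).choose (b+1) : R) = (a.choose b : R) + (a.choose (b+1) : R) := by
  rw [Nat.choose_succ_succ]; push_cast; ring

variable {R : Type*} [CommRing R]

lemma bez_step (m : ℕ) (u : R) :
    (1 - u) * ∑ k ∈ range (m+2), ((m+1+k).choose k : R) * u^k =
      (∑ k ∈ range (m+1), ((m+k).choose k : R) * u^k)
        + ((2*m+1).choose (m+1) : R) * u^(m+1) - ((2*m+2).choose (m+1) : R) * u^(m+2) := by
  have hS : ∑ k ∈ range (m+2), ((m+1+k).choose k : R) * u^k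
      = (∑ k ∈ range (m+1), ((m+2+k).choose (k+1) : R) * u^(k+1)) + 1 := by
    rw [Finset.sum_range_succ']
    simp only [pow_zero, mul_one, Nat.add_zero, Nat.choose_zero_right, Nat.cast_one]
    congr 1
    exact Finset.sum_congr rfl fun k _ => by rw [show m+1+(k+1) = m+2+k by omega]
  have hUS : u * ∑ k ∈ range (m+2), ((m+1+k).choose k : R) * u^k
      = (∑ k ∈ range (m+1), ((m+1+k).choose k : R) * u^(k+1))
        + ((2*m+2).choose (m+1) : R) * u^(m+2) := by
    rw [Finset.mul_sum]
    simp_rw [show ∀ k:ℕ, u * (((m+1+k).choose k : R) * u^k) = ((m+1+k).choose k : R) * u^(k+1) from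
      fun k => by ring]
    rw [Finset.sum_range_succ, show m+1+(m+1) = 2*m+2 by omega]
  have hmid : ∀ k ∈ range (m+1), ((m+2+k).choose (k+1) : R) * u^(k+1)
      - ((m+1+k).choose k : R) * u^(k+1) = ((m+1+k).choose (k+1) : R) * u^(k+1) := by
    intro k _
    have h := pascal_cast (R := R) (m+1+k) k
    rw [show m+1+k+1 = m+2+k by omega] at h
    rw [h]; ring
  have hmid' : ∑ k ∈ range (m+1), ((m+1+k).choose (k+1) : R) * u^(k+1)
      = (∑ k ∈ range m, ((m+1+k).choose (k+1) : R) * u^(k+1))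
        + ((2*m+1).choose (m+1) : R) * u^(m+1) := by
    rw [Finset.sum_range_succ, show m+1+m = 2*m+1 by omega]
  have hfirst : ∑ k ∈ range (m+1), ((m+k).choose k : R) * u^k
      = (∑ k ∈ range m, ((m+1+k).choose (k+1) : R) * u^(k+1)) + 1 := by
    rw [Finset.sum_range_succ']
    simp only [pow_zero, mul_one, Nat.add_zero, Nat.choose_zero_right, Nat.cast_one]
    congr 1
    exact Finset.sum_congr rfl fun k _ => by rw [show m+(k+1) = m+1+k by omega]
  rw [sub_mul, one_mul, hUS, hS, hfirst]
  calc (∑ k ∈ range (m+1), ((m+2+k).choose (k+1) : R) * u^(k+1)) + 1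
        - ((∑ k ∈ range (m+1), ((m+1+k).choose k : R) * u^(k+1))
          + ((2*m+2).choose (m+1) : R) * u^(m+2))
      = (∑ k ∈ range (m+1), (((m+2+k).choose (k+1) : R) * u^(k+1)
          - ((m+1+k).choose k : R) * u^(k+1))) + 1
          - ((2*m+2).choose (m+1) : R) * u^(m+2) := by
        rw [Finset.sum_sub_distrib]; ring
    _ = (∑ k ∈ range (m+1), ((m+1+k).choose (k+1) : R) * u^(k+1)) + 1
          - ((2*m+2).choose (m+1) : R) * u^(m+2) := by
        rw [Finset.sum_congr rfl hmid]
    _ = _ := by rw [hmid']; ring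

lemma bez : ∀ (m : ℕ) (u : R),
    (1-u)^(m+1) * (∑ k ∈ range (m+1), ((m+k).choose k : R) * u^k)
      + u^(m+1) * (∑ k ∈ range (m+1), ((m+k).choose k : R) * (1-u)^k) = 1 := by
  intro m
  induction m with
  | zero => intro u; simp
  | succ m ih =>
      intro u
      have h1 := bez_step m u
      have h2 := bez_step m (1-u)
      rw [show (1 - (1-u)) = u by ring] at h2
      have e1 : (1-u)^(m+2) * (∑ k ∈ range (m+2), ((m+1+k).choose k : R) * u^k)
          = (1-u)^(m+1) * ((1-u) * ∑ k ∈ range (m+2), ((m+1+k).choose k : R) * u^k) := by ring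
      have e2 : u^(m+2) * (∑ k ∈ range (m+2), ((m+1+k).choose k : R) * (1-u)^k)
          = u^(m+1) * (u * ∑ k ∈ range (m+2), ((m+1+k).choose k : R) * (1-u)^k) := by ring
      rw [e1, e2, h1, h2]
      have hc : ((2*m+2).choose (m+1) : R) = 2 * ((2*m+1).choose (m+1) : R) := by
        have h := pascal_cast (R := R) (2*m+1) m
        rw [show 2*m+1+1 = 2*m+2 by omega] at h
        have hsym : (2*m+1).choose m = (2*m+1).choose (m+1) := by
          rw [← Nat.choose_symm (by omega : m+1 ≤ 2*m+1), show 2*m+1-(m+1) = m by omega]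
        rw [hsym] at h
        rw [h]; ring
      have := ih u
      linear_combination this - u^(m+1)*(1-u)^(m+1) * hc

lemma hockey (n j : ℕ) : ∑ b ∈ range (j+1), Nat.choose (n + b) b = Nat.choose (n + j + 1) j := by
  induction j with
  | zero => simp
  | succ j ih =>
      rw [Finset.sum_range_succ, ih, show n + (j+1) + 1 = (n + j + 1) + 1 by omega,
        Nat.choose_succ_succ (n+j+1) j, show n + (j+1) = n+j+1 by omega]

end Aux

noncomputable section PS

/-- geometric series with ratio `a` -/
def geomPS (a : ℝ) : ℝ⟦X⟧ := PowerSeries.mk fun n => a ^ n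

lemma geomPS_inv (a : ℝ) : (1 - PowerSeries.C (R := ℝ) a * X) * geomPS a = 1 := by
  ext n
  rw [sub_mul, one_mul, map_sub, mul_assoc, coeff_C_mul]
  cases n with
  | zero => simp [geomPS, coeff_zero_X_mul]
  | succ n => simp [geomPS, coeff_succ_X_mul, coeff_mk, coeff_one, pow_succ, mul_comm]

lemma coeff_geomPS_pow (a : ℝ) (n j : ℕ) :
    PowerSeries.coeff (R := ℝ) j (geomPS a ^ (n+1)) = ((n+j).choose j : ℝ) * a ^ j := by
  induction n generalizing j with
  | zero => simp [geomPS, coeff_mk]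
  | succ n ih =>
      rw [pow_succ, mul_comm, PowerSeries.coeff_mul,
        Finset.Nat.sum_antidiagonal_eq_sum_range_succ_mk]
      have : ∀ i ∈ range (j+1),
          PowerSeries.coeff (R := ℝ) i (geomPS a) * PowerSeries.coeff (R := ℝ) (j - i) (geomPS a ^ (n+1))
            = ((n + (j-i)).choose (j-i) : ℝ) * a ^ j := by
        intro i hi
        rw [Finset.mem_range] at hi
        rw [ih, geomPS, coeff_mk, ← mul_assoc, mul_comm (a^i), mul_assoc, ← pow_add,
          show i + (j - i) = j by omega]
      rw [Finset.sum_congr rfl this, ← Finset.sum_mul]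
      congr 1
      rw [show ∑ i ∈ range (j+1), ((n + (j-i)).choose (j-i) : ℝ)
          = ∑ i ∈ range (j+1), ((n + i).choose i : ℝ) from
        Finset.sum_nbij' (fun i => j - i) (fun i => j - i) (by intro i hi; simp at *)
          (by intro i hi; simp at *) (by intro i hi; simp at *; omega)
          (by intro i hi; simp at *; omega) (by intro i hi; simp at *)]
      rw [← Nat.cast_sum, hockey, show n+j+1 = n+1+j by omega]

/-- power series of shifted Fibonacci numbers -/
def fibPS : ℝ⟦X⟧ := PowerSeries.mk fun n => (Nat.fib (n+1) : ℝ)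

lemma fibPS_inv : ((1 : ℝ⟦X⟧) - X - X^2) * fibPS = 1 := by
  have : ((1 : ℝ⟦X⟧) - X - X^2) * fibPS = fibPS - X * fibPS - X^2 * (X^0 * fibPS) := by ring
  rw [this]
  ext n
  simp only [map_sub]
  match n with
  | 0 => simp [fibPS, coeff_mk, coeff_zero_X_mul, coeff_one]
  | 1 =>
      rw [coeff_succ_X_mul, PowerSeries.coeff_X_pow_mul' (X^0 * fibPS) 2 1]
      simp [fibPS, coeff_mk, coeff_one]
  | (n+2) =>
      rw [coeff_succ_X_mul, PowerSeries.coeff_X_pow_mul (X^0 * fibPS) 2 n]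
      simp only [pow_zero, one_mul, fibPS, coeff_mk, coeff_one]
      have := Nat.fib_add_two (n := n+1)
      push_cast [this]
      simp

lemma factor_quad :
    ((1 : ℝ⟦X⟧) - PowerSeries.C (R := ℝ) goldenRatio * X) * (1 - PowerSeries.C (R := ℝ) goldenConj * X)
      = 1 - X - X^2 := by
  have h1 : goldenRatio + goldenConj = 1 := goldenRatio_add_goldenConj
  have h2 : goldenRatio * goldenConj = -1 := goldenRatio_mul_goldenConj
  have : ((1 : ℝ⟦X⟧) - PowerSeries.C (R := ℝ) goldenRatio * X) * (1 - PowerSeries.C (R := ℝ) goldenConj * X)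
      = 1 - PowerSeries.C (R := ℝ) (goldenRatio + goldenConj) * X
        + PowerSeries.C (R := ℝ) (goldenRatio * goldenConj) * X^2 := by
    rw [map_add, map_mul]; ring
  rw [this, h1, h2, map_one, map_neg, map_one]
  ring

lemma convFib_eq_coeff (r j : ℕ) : (convFib r j : ℝ) = PowerSeries.coeff (R := ℝ) j (fibPS ^ r) := by
  rw [PowerSeries.coeff_pow, convFib, Nat.cast_sum]
  refine Finset.sum_nbij' (i := fun t => Finsupp.onFinset (range r)
      (fun i => if h : i < r then t ⟨i, h⟩ else 0) ?_)
    (j := fun g => fun i : Fin r => g i.val) ?_ ?_ ?_ ?_ ?_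
  · intro i hi
    by_contra hmem
    simp only [Finset.mem_range] at hmem
    simp [hmem] at hi
  · intro t ht
    rw [Finset.Nat.mem_antidiagonalTuple] at ht
    rw [Finset.mem_finsuppAntidiag]
    refine ⟨?_, Finsupp.support_onFinset_subset⟩
    rw [Finset.sum_range, ← ht]
    apply Finset.sum_congr rfl
    intro i _
    simp [i.isLt]
  · intro g hg
    rw [Finset.mem_finsuppAntidiag] at hg
    rw [Finset.Nat.mem_antidiagonalTuple, ← hg.1, Finset.sum_range]
  · intro t ht
    funext i
    simp [i.isLt]
  · intro g hg
    rw [Finset.mem_finsuppAntidiag] at hg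
    ext i
    simp only [Finsupp.onFinset_apply]
    by_cases h : i < r
    · simp [h]
    · simp only [h, dif_neg, not_false_iff]
      by_contra hne
      have hmem : i ∈ g.support := Finsupp.mem_support_iff.mpr (Ne.symm hne)
      have := hg.2 hmem
      simp only [Finset.mem_range] at this
      omega
  · intro t ht
    push_cast
    rw [Finset.prod_range fun i => _]
    apply Finset.prod_congr rfl
    intro i _
    simp [fibPS, coeff_mk, i.isLt]

lemma mul_eq_one_unique {M : Type*} [CommMonoid M] {u x y : M}
    (hx : x * u = 1) (hy : y * u = 1) : x = y := by
  calc x = x * (y * u) := by rw [hy, mul_one]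
    _ = y * (x * u) := mul_left_comm x y u
    _ = y := by rw [hx, mul_one]

lemma key_phi (r k : ℕ) (hk : k ≤ r) :
    fibPS ^ r * (1 - PowerSeries.C (R := ℝ) goldenRatio * X)^k
      * (1 - PowerSeries.C (R := ℝ) goldenConj * X)^r = geomPS goldenRatio ^ (r-k) := by
  apply mul_eq_one_unique (u := (1 - PowerSeries.C (R := ℝ) goldenRatio * X)^(r-k))
  · calc fibPS ^ r * (1 - PowerSeries.C (R := ℝ) goldenRatio * X)^k
          * (1 - PowerSeries.C (R := ℝ) goldenConj * X)^r
          * (1 - PowerSeries.C (R := ℝ) goldenRatio * X)^(r-k)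
        = fibPS ^ r * ((1 - PowerSeries.C (R := ℝ) goldenRatio * X)^k
            * (1 - PowerSeries.C (R := ℝ) goldenRatio * X)^(r-k))
            * (1 - PowerSeries.C (R := ℝ) goldenConj * X)^r := by ring
      _ = (fibPS * ((1 - PowerSeries.C (R := ℝ) goldenRatio * X)
            * (1 - PowerSeries.C (R := ℝ) goldenConj * X)))^r := by
          rw [← pow_add, show k + (r-k) = r by omega, mul_pow, mul_pow]
          ring
      _ = 1 := by rw [factor_quad, mul_comm, fibPS_inv, one_pow]
  · rw [← mul_pow, mul_comm, geomPS_inv, one_pow]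

lemma key_psi (r k : ℕ) (hk : k ≤ r) :
    fibPS ^ r * (1 - PowerSeries.C (R := ℝ) goldenConj * X)^k
      * (1 - PowerSeries.C (R := ℝ) goldenRatio * X)^r = geomPS goldenConj ^ (r-k) := by
  apply mul_eq_one_unique (u := (1 - PowerSeries.C (R := ℝ) goldenConj * X)^(r-k))
  · calc fibPS ^ r * (1 - PowerSeries.C (R := ℝ) goldenConj * X)^k
          * (1 - PowerSeries.C (R := ℝ) goldenRatio * X)^r
          * (1 - PowerSeries.C (R := ℝ) goldenConj * X)^(r-k)
        = fibPS ^ r * ((1 - PowerSeries.C (R := ℝ) goldenConj * X)^k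
            * (1 - PowerSeries.C (R := ℝ) goldenConj * X)^(r-k))
            * (1 - PowerSeries.C (R := ℝ) goldenRatio * X)^r := by ring
      _ = (fibPS * ((1 - PowerSeries.C (R := ℝ) goldenRatio * X)
            * (1 - PowerSeries.C (R := ℝ) goldenConj * X)))^r := by
          rw [← pow_add, show k + (r-k) = r by omega, mul_pow, mul_pow]
          ring
      _ = 1 := by rw [factor_quad, mul_comm, fibPS_inv, one_pow]
  · rw [← mul_pow, mul_comm, geomPS_inv, one_pow]

lemma fibPS_pow_eq (r : ℕ) (hr : 1 ≤ r) :
    fibPS ^ r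
      = (∑ k ∈ range r, PowerSeries.C (R := ℝ)
          (((r-1+k).choose k : ℝ) * (goldenRatio/√5)^r * (-goldenConj/√5)^k)
            * geomPS goldenRatio ^ (r-k))
      + (∑ k ∈ range r, PowerSeries.C (R := ℝ)
          (((r-1+k).choose k : ℝ) * (-goldenConj/√5)^r * (goldenRatio/√5)^k)
            * geomPS goldenConj ^ (r-k)) := by
  have hs : (√5 : ℝ) ≠ 0 := ne_of_gt (Real.sqrt_pos.mpr (by norm_num))
  set s : ℝ := √5 with hsdef
  set φ : ℝ := goldenRatio
  set ψ : ℝ := goldenConj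
  have hsub : φ - ψ = s := goldenRatio_sub_goldenConj
  set U : ℝ⟦X⟧ := PowerSeries.C (R := ℝ) (-ψ/s) * (1 - PowerSeries.C (R := ℝ) φ * X) with hU
  have h1U : 1 - U = PowerSeries.C (R := ℝ) (φ/s) * (1 - PowerSeries.C (R := ℝ) ψ * X) := by
    have e1 : (1 : ℝ) - (-ψ/s) = φ/s := by
      field_simp
      linarith [hsub]
    have lhs_eq : (1 : ℝ⟦X⟧) - U
        = PowerSeries.C (R := ℝ) (1 - (-ψ/s)) + PowerSeries.C (R := ℝ) ((-ψ/s) * φ) * X := by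
      rw [hU, map_sub, map_mul, map_one]; ring
    have rhs_eq : PowerSeries.C (R := ℝ) (φ/s) * (1 - PowerSeries.C (R := ℝ) ψ * X)
        = PowerSeries.C (R := ℝ) (φ/s) + PowerSeries.C (R := ℝ) (-((φ/s) * ψ)) * X := by
      rw [map_neg, map_mul]; ring
    rw [lhs_eq, rhs_eq, e1, show (-ψ/s) * φ = -((φ/s) * ψ) by ring]
  obtain ⟨m, rfl⟩ : ∃ m, r = m + 1 := ⟨r - 1, by omega⟩
  have hbez := bez (R := ℝ⟦X⟧) m U
  have : fibPS ^ (m+1) = fibPS ^ (m+1) *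
      ((1-U)^(m+1) * (∑ k ∈ range (m+1), ((m+k).choose k : ℝ⟦X⟧) * U^k)
        + U^(m+1) * (∑ k ∈ range (m+1), ((m+k).choose k : ℝ⟦X⟧) * (1-U)^k)) := by
    rw [hbez, mul_one]
  rw [this, mul_add]
  simp only [Finset.mul_sum]
  congr 1
  · apply Finset.sum_congr rfl
    intro k hk
    rw [Finset.mem_range] at hk
    have hk' : k ≤ m + 1 := by omega
    have expand : fibPS ^ (m+1) * ((1-U)^(m+1) * (((m+k).choose k : ℝ⟦X⟧) * U^k))
        = PowerSeries.C (R := ℝ) (((m+k).choose k : ℝ) * (φ/s)^(m+1) * (-ψ/s)^k)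
          * (fibPS ^ (m+1) * (1 - PowerSeries.C (R := ℝ) φ * X)^k
            * (1 - PowerSeries.C (R := ℝ) ψ * X)^(m+1)) := by
      rw [h1U, hU, mul_pow, mul_pow, map_mul, map_mul, map_pow, map_pow,
        ← map_natCast (PowerSeries.C (R := ℝ)) ((m+k).choose k)]
      ring
    rw [expand, key_phi (m+1) k hk', show m+1-1+k = m+k by omega]
  · apply Finset.sum_congr rfl
    intro k hk
    rw [Finset.mem_range] at hk
    have hk' : k ≤ m + 1 := by omega
    have expand : fibPS ^ (m+1) * (U^(m+1) * (((m+k).choose k : ℝ⟦X⟧) * (1-U)^k))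
        = PowerSeries.C (R := ℝ) (((m+k).choose k : ℝ) * (-ψ/s)^(m+1) * (φ/s)^k)
          * (fibPS ^ (m+1) * (1 - PowerSeries.C (R := ℝ) ψ * X)^k
            * (1 - PowerSeries.C (R := ℝ) φ * X)^(m+1)) := by
      rw [h1U, hU, mul_pow, mul_pow, map_mul, map_mul, map_pow, map_pow,
        ← map_natCast (PowerSeries.C (R := ℝ)) ((m+k).choose k)]
      ring
    rw [expand, key_psi (m+1) k hk', show m+1-1+k = m+k by omega]

lemma coeff_fibPS_pow (r j : ℕ) (hr : 1 ≤ r) :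
    (convFib r j : ℝ)
      = (∑ k ∈ range r, ((r-1+k).choose k : ℝ) * (goldenRatio/√5)^r * (-goldenConj/√5)^k
          * (((r-k-1+j).choose j : ℝ) * goldenRatio ^ j))
      + (∑ k ∈ range r, ((r-1+k).choose k : ℝ) * (-goldenConj/√5)^r * (goldenRatio/√5)^k
          * (((r-k-1+j).choose j : ℝ) * goldenConj ^ j)) := by
  rw [convFib_eq_coeff, fibPS_pow_eq r hr, map_add, map_sum, map_sum]
  congr 1
  · apply Finset.sum_congr rfl
    intro k hk
    rw [Finset.mem_range] at hk
    obtain ⟨n, hn⟩ : ∃ n, r - k = n + 1 := ⟨r-k-1, by omega⟩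
    rw [coeff_C_mul, hn, coeff_geomPS_pow, show n + 1 - 1 = n by omega]
  · apply Finset.sum_congr rfl
    intro k hk
    rw [Finset.mem_range] at hk
    obtain ⟨n, hn⟩ : ∃ n, r - k = n + 1 := ⟨r-k-1, by omega⟩
    rw [coeff_C_mul, hn, coeff_geomPS_pow, show n + 1 - 1 = n by omega]

lemma lucas_binet (n : ℕ) : (lucas n : ℝ) = goldenRatio ^ n + goldenConj ^ n := by
  induction n using Nat.twoStepInduction with
  | zero => norm_num [lucas]
  | one =>
      simp only [lucas, pow_one, Nat.cast_one]
      rw [goldenRatio_add_goldenConj]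
  | more n ih1 ih2 =>
      show ((lucas (n+1) + lucas n : ℕ) : ℝ) = _
      push_cast [ih1, ih2]
      have h1 : goldenRatio ^ (n+2) = goldenRatio ^ n * (goldenRatio + 1) := by
        rw [← goldenRatio_sq]; ring
      have h2 : goldenConj ^ (n+2) = goldenConj ^ n * (goldenConj + 1) := by
        rw [← goldenConj_sq]; ring
      rw [h1, h2]; ring

end PS

/-- Theorem 4 of the paper: for `j ≥ 0` and `r ≥ 1`, as an identity in `ℚ`,
`F_{j+1}^{(r)} = ∑_{k=0, r+k ≡ 0 (2)}^{r-1} C(r+k-1,k) C(r-k+j-1,j) L_{r-k+j} / 5^{(k+r)/2}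
  + ∑_{k=0, r+k ≡ 1 (2)}^{r-1} C(r+k-1,k) C(r-k+j-1,j) F_{r-k+j} / 5^{(k+r-1)/2}`. -/
theorem convFib_eq_fib_lucas_sum (j r : ℕ) (hr : 1 ≤ r) :
    (convFib r j : ℚ) =
      (∑ k ∈ Finset.range r, if (r + k) % 2 = 0 then
          (Nat.choose (r + k - 1) k : ℚ) * (Nat.choose (r - k + j - 1) j : ℚ) *
            (lucas (r - k + j) : ℚ) / 5 ^ ((k + r) / 2) else 0) +
      (∑ k ∈ Finset.range r, if (r + k) % 2 = 1 then
          (Nat.choose (r + k - 1) k : ℚ) * (Nat.choose (r - k + j - 1) j : ℚ) *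
            (Nat.fib (r - k + j) : ℚ) / 5 ^ ((k + r - 1) / 2) else 0) := by
  apply Rat.cast_injective (α := ℝ)
  push_cast [apply_ite (Rat.cast (K := ℝ))]
  rw [coeff_fibPS_pow r j hr, ← Finset.sum_add_distrib, ← Finset.sum_add_distrib]
  apply Finset.sum_congr rfl
  intro k hk
  rw [Finset.mem_range] at hk
  rw [show r-1+k = r+k-1 by omega, show r-k-1+j = r-k+j-1 by omega]
  have hs : (√5 : ℝ) ≠ 0 := ne_of_gt (Real.sqrt_pos.mpr (by norm_num))
  have hs2 : (√5 : ℝ)^2 = 5 := Real.sq_sqrt (by norm_num)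
  have hφψ : goldenRatio * (-goldenConj) = 1 := by
    rw [mul_neg, goldenRatio_mul_goldenConj]; norm_num
  set s : ℝ := √5
  set φ : ℝ := goldenRatio
  set ψ : ℝ := goldenConj
  set n : ℕ := r - k + j with hn
  have he : r + j = n + k := by omega
  have hψφ : ψ * φ = -1 := by
    rw [mul_comm, ← neg_neg (φ * ψ), ← mul_neg, hφψ]
  have h1 : φ^r * (-ψ)^k * φ^j = φ^n := by
    calc φ^r * (-ψ)^k * φ^j = φ^(r+j) * (-ψ)^k := by rw [pow_add]; ring
      _ = φ^n * (φ^k * (-ψ)^k) := by rw [he, pow_add]; ring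
      _ = φ^n := by rw [← mul_pow, hφψ, one_pow, mul_one]
  have h2 : (-ψ)^r * φ^k * ψ^j = (-1)^(r+k) * ψ^n := by
    calc (-ψ)^r * φ^k * ψ^j = (-1)^r * (ψ^(r+j) * φ^k) := by rw [neg_pow, pow_add]; ring
      _ = (-1)^r * (ψ^n * (ψ^k * φ^k)) := by rw [he, pow_add]; ring
      _ = (-1)^r * (ψ^n * (-1)^k) := by rw [← mul_pow, hψφ]
      _ = (-1)^(r+k) * ψ^n := by rw [pow_add]; ring
  have hdd : ∀ x y : ℝ, (x/s)^r * (y/s)^k = x^r * y^k / s^(r+k) := by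
    intro x y
    rw [div_pow, div_pow, div_mul_div_comm, pow_add]
  have hcomb : (φ/s)^r * (-ψ/s)^k * φ^j + (-ψ/s)^r * (φ/s)^k * ψ^j
      = (φ^n + (-1)^(r+k) * ψ^n) / s^(r+k) := by
    rw [hdd φ (-ψ), hdd (-ψ) φ, div_mul_eq_mul_div, div_mul_eq_mul_div, ← add_div,
      h1, h2]
  by_cases hpar : (r + k) % 2 = 0
  · rw [if_pos hpar, if_neg (by omega)]
    have heps : ((-1 : ℝ))^(r+k) = 1 :=
      Even.neg_one_pow (Nat.even_iff.mpr hpar)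
    have hspow : s^(r+k) = 5^((k+r)/2) := by
      rw [show r+k = 2*((k+r)/2) by omega, pow_mul, hs2]
    rw [heps, one_mul, hspow] at hcomb
    have hl : (lucas n : ℝ) = φ^n + ψ^n := lucas_binet n
    calc ((r+k-1).choose k : ℝ) * (φ/s)^r * (-ψ/s)^k * (((r-k+j-1).choose j : ℝ) * φ^j)
          + ((r+k-1).choose k : ℝ) * (-ψ/s)^r * (φ/s)^k * (((r-k+j-1).choose j : ℝ) * ψ^j)
        = ((r+k-1).choose k : ℝ) * ((r-k+j-1).choose j : ℝ)
            * ((φ/s)^r * (-ψ/s)^k * φ^j + (-ψ/s)^r * (φ/s)^k * ψ^j) := by ring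
      _ = ((r+k-1).choose k : ℝ) * ((r-k+j-1).choose j : ℝ) * (lucas n : ℝ) / 5^((k+r)/2)
            + 0 := by rw [hcomb, hl]; ring
  · rw [if_neg hpar, if_pos (by omega)]
    have heps : ((-1 : ℝ))^(r+k) = -1 :=
      Odd.neg_one_pow (Nat.odd_iff.mpr (by omega))
    have hspow : s^(r+k) = 5^((k+r-1)/2) * s := by
      rw [show r+k = 2*((k+r-1)/2) + 1 by omega, pow_succ, pow_mul, hs2]
    have hf : φ^n - ψ^n = (Nat.fib n : ℝ) * s := by
      rw [Real.coe_fib_eq n, div_mul_cancel₀ _ hs]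
    rw [heps, hspow] at hcomb
    rw [show φ^n + -1 * ψ^n = φ^n - ψ^n by ring, hf] at hcomb
    have h5 : (5:ℝ)^((k+r-1)/2) ≠ 0 := by positivity
    rw [show (Nat.fib n : ℝ) * s / (5^((k+r-1)/2) * s) = (Nat.fib n : ℝ) / 5^((k+r-1)/2) by
      field_simp] at hcomb
    calc ((r+k-1).choose k : ℝ) * (φ/s)^r * (-ψ/s)^k * (((r-k+j-1).choose j : ℝ) * φ^j)
          + ((r+k-1).choose k : ℝ) * (-ψ/s)^r * (φ/s)^k * (((r-k+j-1).choose j : ℝ) * ψ^j)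
        = ((r+k-1).choose k : ℝ) * ((r-k+j-1).choose j : ℝ)
            * ((φ/s)^r * (-ψ/s)^k * φ^j + (-ψ/s)^r * (φ/s)^k * ψ^j) := by ring
      _ = 0 + ((r+k-1).choose k : ℝ) * ((r-k+j-1).choose j : ℝ)
            * (Nat.fib n : ℝ) / 5^((k+r-1)/2) := by rw [hcomb]; ring
end

section
/- For every integer j ≥ 0, one has 5·F_{j+1}^{(2)} = (j+1)·L_{j+2} + 2·F_{j+1}, where F_n are the Fibonacci numbers and L_n the Lucas numbers. -/
private def S (n : ℕ) : ℕ := ∑ i ∈ Finset.range (n + 1), Nat.fib (i + 1) * Nat.fib (n - i + 1)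

private lemma convFib_two (j : ℕ) : convFib 2 j = S j := by
  rw [convFib, Finset.Nat.antidiagonalTuple_two, Finset.sum_map]
  rw [show (Finset.HasAntidiagonal.antidiagonal j).sum _ =
      ∑ ij ∈ Finset.HasAntidiagonal.antidiagonal j, Nat.fib (ij.1 + 1) * Nat.fib (ij.2 + 1) from by
    apply Finset.sum_congr rfl; intro ij _; simp [Fin.prod_univ_two]]
  rw [Finset.Nat.sum_antidiagonal_eq_sum_range_succ_mk]
  rfl

private lemma S_rec (n : ℕ) : S (n + 2) = S (n + 1) + S n + Nat.fib (n + 3) := by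
  have h1 : S (n + 2) = (∑ i ∈ Finset.range (n + 2), Nat.fib (i + 1) * Nat.fib (n + 2 - i + 1))
      + Nat.fib (n + 3) := by
    rw [S, Finset.sum_range_succ]
    simp
  have h2 : ∀ i ∈ Finset.range (n + 2), Nat.fib (i + 1) * Nat.fib (n + 2 - i + 1)
      = Nat.fib (i + 1) * Nat.fib (n + 1 - i + 1) + Nat.fib (i + 1) * Nat.fib (n + 1 - i) := by
    intro i hi
    have hi' : i ≤ n + 1 := by simpa using Nat.lt_succ_iff.mp (Finset.mem_range.mp hi)
    rw [show n + 2 - i + 1 = (n + 1 - i) + 2 by omega, Nat.fib_add_two, Nat.mul_add, Nat.add_comm]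
  rw [h1, Finset.sum_congr rfl h2, Finset.sum_add_distrib]
  have h3 : ∑ i ∈ Finset.range (n + 2), Nat.fib (i + 1) * Nat.fib (n + 1 - i) = S n := by
    rw [Finset.sum_range_succ]
    simp only [Nat.sub_self, Nat.fib_zero, Nat.mul_zero, Nat.add_zero]
    apply Finset.sum_congr rfl
    intro i hi
    have hi' : i ≤ n := Nat.lt_succ_iff.mp (Finset.mem_range.mp hi)
    rw [show n + 1 - i = (n - i) + 1 by omega]
  rw [h3]
  rfl

private lemma lucas_add : ∀ n, lucas (n + 2) + lucas n = 5 * Nat.fib (n + 1)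
  | 0 => by decide
  | 1 => by decide
  | n + 2 => by
    have h1 : lucas (n + 2) + lucas n = 5 * Nat.fib (n + 1) := lucas_add n
    have h2 : lucas (n + 3) + lucas (n + 1) = 5 * Nat.fib (n + 2) := lucas_add (n + 1)
    have e1 : lucas (n + 4) = lucas (n + 3) + lucas (n + 2) := rfl
    have e2 : lucas (n + 3) = lucas (n + 2) + lucas (n + 1) := rfl
    have e3 : lucas (n + 2) = lucas (n + 1) + lucas n := rfl
    have f : Nat.fib (n + 3) = Nat.fib (n + 1) + Nat.fib (n + 2) := Nat.fib_add_two
    show lucas (n + 4) + lucas (n + 2) = 5 * Nat.fib (n + 3)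
    omega

private lemma key : ∀ n, 5 * S n = (n + 1) * lucas (n + 2) + 2 * Nat.fib (n + 1)
  | 0 => by decide
  | 1 => by decide
  | n + 2 => by
    have ih1 : 5 * S n = (n + 1) * lucas (n + 2) + 2 * Nat.fib (n + 1) := key n
    have ih2 : 5 * S (n + 1) = (n + 2) * lucas (n + 3) + 2 * Nat.fib (n + 2) := key (n + 1)
    have hl : lucas (n + 4) + lucas (n + 2) = 5 * Nat.fib (n + 3) := lucas_add (n + 2)
    have e1 : lucas (n + 4) = lucas (n + 3) + lucas (n + 2) := rfl
    show 5 * S (n + 2) = (n + 3) * lucas (n + 4) + 2 * Nat.fib (n + 3)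
    rw [S_rec, Nat.mul_add, Nat.mul_add, ih1, ih2, ← hl, e1,
      show Nat.fib (n + 3) = Nat.fib (n + 1) + Nat.fib (n + 2) from Nat.fib_add_two]
    ring

/-- For every integer `j ≥ 0`, `5 F_{j+1}^{(2)} = (j+1) L_{j+2} + 2 F_{j+1}`. -/
theorem five_mul_convFib_two (j : ℕ) :
    5 * convFib 2 j = (j + 1) * lucas (j + 2) + 2 * Nat.fib (j + 1) := by
  rw [convFib_two]; exact key j
end

section
/- For every integer j ≥ 0, one has 50·F_{j+1}^{(3)} = 5(j+1)(j+2)·F_{j+3} + 6(j+1)·L_{j+2} + 12·F_{j+1}, where F_n are the Fibonacci numbers and L_n the Lucas numbers. -/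
lemma convFib_succ' (r m : ℕ) :
    convFib (r + 1) m =
      ∑ p ∈ Finset.HasAntidiagonal.antidiagonal m, Nat.fib (p.1 + 1) * convFib r p.2 := by
  simp only [convFib, Finset.mul_sum]
  rw [Finset.sum_sigma']
  refine Finset.sum_bij' (fun x _ => ⟨(x 0, ∑ i : Fin r, x i.succ), Fin.tail x⟩)
    (fun p _ => Fin.cons p.1.1 p.2) ?_ ?_ ?_ ?_ ?_
  · intro x hx
    rw [Finset.Nat.mem_antidiagonalTuple] at hx
    simp only [Finset.mem_sigma, Finset.HasAntidiagonal.mem_antidiagonal,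
      Finset.Nat.mem_antidiagonalTuple]
    exact ⟨by rw [← hx, Fin.sum_univ_succ], rfl⟩
  · rintro ⟨⟨a, b⟩, t⟩ hp
    simp only [Finset.mem_sigma, Finset.HasAntidiagonal.mem_antidiagonal,
      Finset.Nat.mem_antidiagonalTuple] at hp
    rw [Finset.Nat.mem_antidiagonalTuple, Fin.sum_cons, hp.2, hp.1]
  · intro x _
    exact Fin.cons_self_tail x
  · rintro ⟨⟨a, b⟩, t⟩ hp
    simp only [Finset.mem_sigma, Finset.HasAntidiagonal.mem_antidiagonal,
      Finset.Nat.mem_antidiagonalTuple] at hp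
    simp [Fin.tail_cons, hp.2]
  · intro x hx
    rw [Fin.prod_univ_succ]
    rfl

lemma convFib_succ (r m : ℕ) :
    convFib (r + 1) m =
      ∑ a ∈ Finset.range (m + 1), Nat.fib (a + 1) * convFib r (m - a) := by
  rw [convFib_succ',
    Finset.Nat.sum_antidiagonal_eq_sum_range_succ (fun a b => Nat.fib (a + 1) * convFib r b)]

lemma convFib_one (m : ℕ) : convFib 1 m = Nat.fib (m + 1) := by
  simp [convFib, Finset.Nat.antidiagonalTuple_one]

/-- Generic recurrence for Fibonacci convolutions. -/
lemma conv_rec (f : ℕ → ℕ) (m : ℕ) :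
    ∑ a ∈ Finset.range (m + 3), Nat.fib (a + 1) * f (m + 2 - a) =
      (∑ a ∈ Finset.range (m + 2), Nat.fib (a + 1) * f (m + 1 - a)) +
        (∑ a ∈ Finset.range (m + 1), Nat.fib (a + 1) * f (m - a)) + f (m + 2) := by
  rw [Finset.sum_range_succ' _ (m + 2), Finset.sum_range_succ' _ (m + 1),
    Finset.sum_range_succ' _ (m + 1)]
  have h1 : ∀ a ∈ Finset.range (m + 1),
      Nat.fib (a + 1 + 1 + 1) * f (m + 2 - (a + 1 + 1)) =
        Nat.fib (a + 1 + 1) * f (m - a) + Nat.fib (a + 1) * f (m - a) := by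
    intro a ha
    have h : m + 2 - (a + 1 + 1) = m - a := by omega
    rw [h, Nat.fib_add_two, Nat.add_mul]
    ring
  rw [Finset.sum_congr rfl h1, Finset.sum_add_distrib]
  have h2 : ∀ a ∈ Finset.range (m + 1),
      Nat.fib (a + 1 + 1) * f (m + 1 - (a + 1)) = Nat.fib (a + 1 + 1) * f (m - a) := by
    intro a ha
    have h : m + 1 - (a + 1) = m - a := by omega
    rw [h]
  rw [Finset.sum_congr rfl h2]
  simp [Nat.fib_one, Nat.fib_two]
  ring

lemma convFib_two_rec (m : ℕ) :
    convFib 2 (m + 2) = convFib 2 (m + 1) + convFib 2 m + Nat.fib (m + 3) := by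
  have := conv_rec (convFib 1) m
  rw [show m + 3 = m + 2 + 1 from rfl] at this
  rw [convFib_succ 1 (m + 2), convFib_succ 1 (m + 1), convFib_succ 1 m, this, convFib_one]

lemma convFib_three_rec (m : ℕ) :
    convFib 3 (m + 2) = convFib 3 (m + 1) + convFib 3 m + convFib 2 (m + 2) := by
  have := conv_rec (convFib 2) m
  rw [show m + 3 = m + 2 + 1 from rfl] at this
  rw [convFib_succ 2 (m + 2), convFib_succ 2 (m + 1), convFib_succ 2 m, this]

lemma lucas_eq_fib (n : ℕ) : lucas (n + 1) = Nat.fib n + Nat.fib (n + 2) := by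
  induction n using Nat.twoStepInduction with
  | zero => rfl
  | one => rfl
  | more n ih1 ih2 =>
    have h1 : Nat.fib (n + 2 + 2) = Nat.fib (n + 2) + Nat.fib (n + 2 + 1) := Nat.fib_add_two
    have h2 : Nat.fib (n + 2) = Nat.fib n + Nat.fib (n + 1) := Nat.fib_add_two
    have h3 : lucas (n + 2 + 1) = lucas (n + 1 + 1) + lucas (n + 1) := rfl
    simp only [show n + 2 + 2 = n + 4 from by omega, show n + 2 + 1 = n + 3 from by omega,
      show n + 1 + 2 = n + 3 from by omega, show n + 1 + 1 = n + 2 from by omega] at *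
    omega

lemma convFib_two_closed (m : ℕ) :
    5 * convFib 2 m + Nat.fib (m + 2) = (m + 2) * lucas (m + 2) := by
  induction m using Nat.twoStepInduction with
  | zero => decide
  | one => decide
  | more m ih1 ih2 =>
    rw [convFib_two_rec]
    simp only [show m + 2 + 2 = m + 4 from by omega, show m + 2 + 1 = m + 3 from by omega,
      show m + 1 + 2 = m + 3 from by omega] at *
    have D1 : (5 * (convFib 2 m : ℤ) + Nat.fib (m + 2)) = ((m : ℤ) + 2) * lucas (m + 2) := by
      exact_mod_cast ih1
    have D2 : (5 * (convFib 2 (m + 1) : ℤ) + Nat.fib (m + 3)) = ((m : ℤ) + 3) * lucas (m + 3) := by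
      exact_mod_cast ih2
    have D4 : ((lucas (m + 4) : ℤ)) = lucas (m + 3) + lucas (m + 2) := by exact_mod_cast rfl
    have D5 : ((lucas (m + 2) : ℤ)) = Nat.fib (m + 1) + Nat.fib (m + 3) := by
      exact_mod_cast lucas_eq_fib (m + 1)
    have D6 : ((lucas (m + 3) : ℤ)) = Nat.fib (m + 2) + Nat.fib (m + 4) := by
      have := lucas_eq_fib (m + 2)
      rw [show m + 2 + 2 = m + 4 from by omega, show m + 2 + 1 = m + 3 from by omega] at this
      exact_mod_cast this
    have D7 : ((Nat.fib (m + 3) : ℤ)) = Nat.fib (m + 1) + Nat.fib (m + 2) := by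
      exact_mod_cast (Nat.fib_add_two : Nat.fib (m + 1 + 2) = _)
    have goalZ : (5 * ((convFib 2 (m + 1) : ℤ) + convFib 2 m + Nat.fib (m + 3)) + Nat.fib (m + 4))
        = ((m : ℤ) + 4) * lucas (m + 4) := by
      linear_combination D1 + D2 - ((m : ℤ) + 4) * D4 - 2 * D5 - D6 + 2 * D7
    exact_mod_cast goalZ


/-- For every integer `j ≥ 0`,
`50 F_{j+1}^{(3)} = 5(j+1)(j+2) F_{j+3} + 6(j+1) L_{j+2} + 12 F_{j+1}`. -/
theorem fifty_mul_convFib_three (j : ℕ) :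
    50 * convFib 3 j =
      5 * (j + 1) * (j + 2) * Nat.fib (j + 3) + 6 * (j + 1) * lucas (j + 2) +
        12 * Nat.fib (j + 1) := by
  induction j using Nat.twoStepInduction with
  | zero => decide
  | one => decide
  | more m ih1 ih2 =>
    have e1 : m + 2 + 3 = m + 5 := by omega
    have e2 : m + 2 + 2 = m + 4 := by omega
    have e3 : m + 2 + 1 = m + 3 := by omega
    have e4 : m + 1 + 3 = m + 4 := by omega
    have e5 : m + 1 + 2 = m + 3 := by omega
    have e6 : m + 1 + 1 = m + 2 := by omega
    rw [convFib_three_rec, e1, e2, e3]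
    rw [e4, e5, e6] at ih2
    -- pass to integers
    have B : ((convFib 3 (m + 2) : ℤ)) = convFib 3 (m + 1) + convFib 3 m + convFib 2 (m + 2) := by
      exact_mod_cast convFib_three_rec m
    have C : (5 * (convFib 2 (m + 2) : ℤ) + Nat.fib (m + 4)) = ((m : ℤ) + 4) * lucas (m + 4) := by
      have := convFib_two_closed (m + 2)
      rw [e2] at this
      exact_mod_cast this
    have I1 : (50 * (convFib 3 (m + 1) : ℤ)) =
        5 * ((m : ℤ) + 2) * ((m : ℤ) + 3) * Nat.fib (m + 4) + 6 * ((m : ℤ) + 2) * lucas (m + 3) +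
          12 * Nat.fib (m + 2) := by exact_mod_cast ih2
    have I2 : (50 * (convFib 3 m : ℤ)) =
        5 * ((m : ℤ) + 1) * ((m : ℤ) + 2) * Nat.fib (m + 3) + 6 * ((m : ℤ) + 1) * lucas (m + 2) +
          12 * Nat.fib (m + 1) := by exact_mod_cast ih1
    have h4 : ((lucas (m + 4) : ℤ)) = lucas (m + 3) + lucas (m + 2) := by exact_mod_cast rfl
    have h5 : ((lucas (m + 2) : ℤ)) = Nat.fib (m + 1) + Nat.fib (m + 3) := by
      exact_mod_cast lucas_eq_fib (m + 1)
    have h6 : ((lucas (m + 3) : ℤ)) = Nat.fib (m + 2) + Nat.fib (m + 4) := by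
      exact_mod_cast lucas_eq_fib (m + 2)
    have h7 : ((Nat.fib (m + 3) : ℤ)) = Nat.fib (m + 1) + Nat.fib (m + 2) := by
      exact_mod_cast (Nat.fib_add_two : Nat.fib (m + 1 + 2) = _)
    have h8 : ((Nat.fib (m + 4) : ℤ)) = Nat.fib (m + 2) + Nat.fib (m + 3) := by
      have := (Nat.fib_add_two : Nat.fib (m + 2 + 2) = _)
      rw [e2] at this
      exact_mod_cast this
    have h9 : ((Nat.fib (m + 5) : ℤ)) = Nat.fib (m + 3) + Nat.fib (m + 4) := by
      have := (Nat.fib_add_two : Nat.fib (m + 3 + 2) = _)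
      rw [show m + 3 + 2 = m + 5 from by omega, show m + 3 + 1 = m + 4 from by omega] at this
      exact_mod_cast this
    have goalZ : (50 * ((convFib 3 (m + 1) : ℤ) + convFib 3 m + convFib 2 (m + 2))) =
        5 * ((m : ℤ) + 3) * ((m : ℤ) + 4) * Nat.fib (m + 5) + 6 * ((m : ℤ) + 3) * lucas (m + 4) +
          12 * Nat.fib (m + 3) := by
      linear_combination I1 + I2 + 10 * C + (4 * (m : ℤ) + 22) * h4 +
        (10 * (m : ℤ) + 28) * h5 + (10 * (m : ℤ) + 34) * h6 - (10 * (m : ℤ) + 40) * h7 -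
        6 * h8 - 5 * ((m : ℤ) + 3) * ((m : ℤ) + 4) * h9
    exact_mod_cast goalZ
end

section
/- Let f be a formal power series with integer coefficients and r ≥ 1 an integer. Then the Witt transform W_f^{(r)}(z) = (1/r) Σ_{d | r} μ(d) f(z^d)^{r/d} also has integer coefficients; that is, for every j ≥ 0, the rational number m_f(j, r) is an integer (equivalently, r divides the j-th coefficient of Σ_{d | r} μ(d) f(z^d)^{r/d}). -/
open Polynomial in
lemma frob_cong (p : ℕ) (hp : p.Prime) (h : Polynomial ℤ) :
    ((p : ℕ) : Polynomial ℤ) ∣ h ^ p - expand ℤ p h := by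
  haveI : Fact p.Prime := ⟨hp⟩
  rw [show ((p : ℕ) : Polynomial ℤ) = C (p : ℤ) by simp, C_dvd_iff_dvd_coeff]
  intro i
  rw [← ZMod.intCast_zmod_eq_zero_iff_dvd]
  have : ((h ^ p - expand ℤ p h).map (Int.castRingHom (ZMod p))).coeff i = 0 := by
    have : (h.map (Int.castRingHom (ZMod p))) ^ p
        = expand (ZMod p) p (h.map (Int.castRingHom (ZMod p))) := by
      rw [← (h.map (Int.castRingHom (ZMod p))).map_frobenius_expand p, ZMod.frobenius_zmod, map_id]
    rw [Polynomial.map_sub, Polynomial.map_pow, map_expand, this, sub_self, coeff_zero]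
  rw [coeff_map] at this; simpa using this

open Polynomial in
lemma pow_dvd_pair (p : ℕ) (hp : p.Prime) (k t : ℕ) (h : Polynomial ℤ) :
    ((p : Polynomial ℤ)) ^ (k + 1) ∣
      h ^ (p * (p ^ k * t)) - (expand ℤ p h) ^ (p ^ k * t) := by
  have h1 : ((p : Polynomial ℤ)) ^ (k + 1) ∣ (h ^ p) ^ p ^ k - (expand ℤ p h) ^ p ^ k :=
    dvd_sub_pow_of_dvd_sub (frob_cong p hp h) k
  have h2 : (h ^ p) ^ p ^ k - (expand ℤ p h) ^ p ^ k ∣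
      ((h ^ p) ^ p ^ k) ^ t - ((expand ℤ p h) ^ p ^ k) ^ t :=
    sub_dvd_pow_sub_pow _ _ t
  have := h1.trans h2
  rw [← pow_mul, ← pow_mul, ← pow_mul] at this; exact this

open Polynomial ArithmeticFunction ArithmeticFunction.Moebius in
lemma key_dvd (g : Polynomial ℤ) (r : ℕ) (hr : 1 ≤ r) (j : ℕ) :
    (r : ℤ) ∣ (∑ d ∈ r.divisors, (μ d : ℤ) • (expand ℤ d g) ^ (r / d)).coeff j := by
  have hr0 : r ≠ 0 := by omega
  set S : Polynomial ℤ := ∑ d ∈ r.divisors, (μ d : ℤ) • (expand ℤ d g) ^ (r / d) with hS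
  -- prime power divisibility
  have hall : ∀ p ∈ r.primeFactors, ((p : ℤ)) ^ (r.factorization p) ∣ S.coeff j := by
    intro p hpmem
    have hp : p.Prime := Nat.prime_of_mem_primeFactors hpmem
    have hpr : p ∣ r := Nat.dvd_of_mem_primeFactors hpmem
    set k := r.factorization p with hk
    have hk1 : 1 ≤ k := (Nat.Prime.factorization_pos_of_dvd hp hr0 hpr)
    set s := r / p ^ k with hs
    have hps : p ^ k * s = r := Nat.ordProj_mul_ordCompl_eq_self r p
    have hpns : ¬ p ∣ s := Nat.not_dvd_ordCompl hp hr0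
    have hs0 : s ≠ 0 := by
      intro h0; rw [h0, mul_zero] at hps; exact hr0 hps.symm
    -- ring divisibility in ℤ[X]
    have hring : ((p : Polynomial ℤ)) ^ k ∣ S := by
      set E : ℕ → Polynomial ℤ := fun d => (expand ℤ d g) ^ (r / d) with hE
      set A := s.divisors with hA
      set B := A.image (fun e => p * e) with hB
      have hsub : A ∪ B ⊆ r.divisors := by
        intro d hd
        rcases Finset.mem_union.mp hd with hd | hd
        · exact Nat.mem_divisors.mpr ⟨(Nat.mem_divisors.mp hd).1.trans ⟨p ^ k, by rw [← hps]; ring⟩, hr0⟩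
        · obtain ⟨e, he, rfl⟩ := Finset.mem_image.mp hd
          refine Nat.mem_divisors.mpr ⟨?_, hr0⟩
          rw [← hps]
          exact mul_dvd_mul (dvd_pow_self p (by omega)) (Nat.mem_divisors.mp he).1
      have hzero : ∀ d ∈ r.divisors, d ∉ A ∪ B → (μ d : ℤ) • E d = 0 := by
        intro d hd hnd
        have hdr : d ∣ r := (Nat.mem_divisors.mp hd).1
        have hmu : μ d = 0 := by
          by_contra hne
          have hsq : Squarefree d := moebius_ne_zero_iff_squarefree.mp hne
          apply hnd
          by_cases hpd : p ∣ d
          · obtain ⟨e, rfl⟩ := hpd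
            have hpe : ¬ p ∣ e := by
              intro hpe
              have : p * p ∣ p * e := mul_dvd_mul_left p hpe
              exact hp.one_lt.ne' (Nat.isUnit_iff.mp (hsq p this))
            have hes : e ∣ s := by
              have hed : e ∣ p ^ k * s := by rw [hps]; exact (dvd_mul_left e p).trans hdr
              exact (((hp.coprime_iff_not_dvd).mpr hpe).symm.pow_right k).dvd_of_dvd_mul_left hed
            exact Finset.mem_union_right _ (Finset.mem_image.mpr ⟨e, Nat.mem_divisors.mpr ⟨hes, hs0⟩, rfl⟩)
          · have hds : d ∣ s := by
              have hdd : d ∣ p ^ k * s := by rw [hps]; exact hdr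
              exact (((hp.coprime_iff_not_dvd).mpr hpd).pow_left k).symm.dvd_of_dvd_mul_left hdd
            exact Finset.mem_union_left _ (Nat.mem_divisors.mpr ⟨hds, hs0⟩)
        rw [hmu]; simp
      have hdisj : Disjoint A B := by
        rw [Finset.disjoint_left]
        intro d hdA hdB
        obtain ⟨e, _, rfl⟩ := Finset.mem_image.mp hdB
        exact hpns ((dvd_mul_right p e).trans (Nat.mem_divisors.mp hdA).1)
      have hinj : Set.InjOn (fun e => p * e) A := by
        intro a _ b _ hab
        exact Nat.eq_of_mul_eq_mul_left hp.pos hab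
      have hSeq : S = ∑ e ∈ A, (μ e : ℤ) • (E e - E (p * e)) := by
        rw [hS]
        rw [← Finset.sum_subset hsub hzero]
        rw [Finset.sum_union hdisj, Finset.sum_image hinj]
        have : ∀ e ∈ A, (μ (p * e) : ℤ) • E (p * e) = -((μ e : ℤ) • E (p * e)) := by
          intro e heA
          have hes : e ∣ s := (Nat.mem_divisors.mp heA).1
          have hcop : p.Coprime e := (hp.coprime_iff_not_dvd).mpr (fun h => hpns (h.trans hes))
          rw [isMultiplicative_moebius.map_mul_of_coprime hcop, moebius_apply_prime hp]
          push_cast; rw [neg_one_mul, neg_smul]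
        rw [Finset.sum_congr rfl this, ← Finset.sum_add_distrib]
        exact Finset.sum_congr rfl fun e _ => by rw [smul_sub, sub_eq_add_neg]
      rw [hSeq]
      apply Finset.dvd_sum
      intro e heA
      have hes : e ∣ s := (Nat.mem_divisors.mp heA).1
      have he0 : e ≠ 0 := fun h => hs0 (Nat.eq_zero_of_zero_dvd (h ▸ hes))
      obtain ⟨t, ht⟩ := hes
      have hpk : p ^ k = p * p ^ (k - 1) := by
        rw [← pow_succ']; congr 1; omega
      have h1 : r / e = p * (p ^ (k - 1) * t) := by
        rw [← hps, ht, show p ^ k * (e * t) = e * (p * (p ^ (k - 1) * t)) by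
          rw [hpk]; ring]
        exact Nat.mul_div_cancel_left _ (Nat.pos_of_ne_zero he0)
      have h2 : r / (p * e) = p ^ (k - 1) * t := by
        rw [← hps, ht, show p ^ k * (e * t) = (p * e) * (p ^ (k - 1) * t) by
          rw [hpk]; ring]
        exact Nat.mul_div_cancel_left _ (Nat.mul_pos hp.pos (Nat.pos_of_ne_zero he0))
      have hpair := pow_dvd_pair p hp (k - 1) t (expand ℤ e g)
      rw [show (k - 1) + 1 = k by omega] at hpair
      have : E e - E (p * e) = (expand ℤ e g) ^ (p * (p ^ (k - 1) * t))
          - (expand ℤ p (expand ℤ e g)) ^ (p ^ (k - 1) * t) := by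
        rw [hE]; simp only [h1, h2, expand_expand]
      rw [this, zsmul_eq_mul]
      exact hpair.mul_left _
    -- pass to coefficients
    have : C ((p : ℤ) ^ k) ∣ S := by
      rwa [map_pow, show (C (p : ℤ)) = ((p : ℕ) : Polynomial ℤ) by push_cast; rfl]
    exact (C_dvd_iff_dvd_coeff _ _).mp this j
  -- combine prime powers
  have hprod : ∏ p ∈ r.primeFactors, ((p : ℤ)) ^ (r.factorization p) ∣ S.coeff j := by
    apply Finset.prod_dvd_of_coprime
    · intro a ha b hb hab
      have hpa : Nat.Prime a := Nat.prime_of_mem_primeFactors ha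
      have hpb : Nat.Prime b := Nat.prime_of_mem_primeFactors hb
      refine IsCoprime.pow ?_
      rw [Int.isCoprime_iff_gcd_eq_one, Int.gcd_natCast_natCast]
      exact (Nat.coprime_primes hpa hpb).mpr hab
    · exact hall
  have : (∏ p ∈ r.primeFactors, ((p : ℤ)) ^ (r.factorization p)) = (r : ℤ) := by
    rw [show (r : ℤ) = ((r.factorization.prod (· ^ ·) : ℕ) : ℤ) by
      rw [Nat.factorization_prod_pow_eq_self hr0]]
    rw [Finsupp.prod, Nat.support_factorization]
    push_cast
    rfl
  rwa [this] at hprod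

/-- Substitution of `z^d` into a formal power series: `expandPS d f = f(z^d)`. -/
noncomputable def expandPS (d : ℕ) (f : PowerSeries ℚ) : PowerSeries ℚ :=
  PowerSeries.mk fun j => if d ∣ j then PowerSeries.coeff (R := ℚ) (j / d) f else 0

/-- The Witt transform `W_f^{(r)}(z) = (1/r) ∑_{d ∣ r} μ(d) f(z^d)^{r/d}`;
its `j`-th coefficient is `m_f(j, r)`. -/
noncomputable def witt (f : PowerSeries ℚ) (r : ℕ) : PowerSeries ℚ :=
  (1 / (r : ℚ)) • ∑ d ∈ r.divisors,
    ((ArithmeticFunction.moebius d : ℤ) : ℚ) • (expandPS d f) ^ (r / d)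

/-- If `f ∈ ℤ[[z]]` and `r ≥ 1`, then every coefficient `m_f(j, r)` of the Witt
transform `W_f^{(r)}` is an integer. -/
theorem witt_coeff_isInt (f : PowerSeries ℚ)
    (hf : ∀ j, ∃ n : ℤ, PowerSeries.coeff (R := ℚ) j f = n) (r : ℕ) (hr : 1 ≤ r) :
    ∀ j, ∃ n : ℤ, PowerSeries.coeff (R := ℚ) j (witt f r) = n := by
  intro j
  have hrQ : (r : ℚ) ≠ 0 := Nat.cast_ne_zero.mpr (by omega)
  choose n hn using hf
  set g : Polynomial ℤ := ∑ i ∈ Finset.range (j + 1), Polynomial.C (n i) * Polynomial.X ^ i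
    with hg
  have hgc : ∀ u, u ≤ j → g.coeff u = n u := by
    intro u hu
    rw [hg, Polynomial.finset_sum_coeff, Finset.sum_eq_single u]
    · simp [Polynomial.coeff_X_pow]
    · intro b _ hb
      simp [Polynomial.coeff_X_pow, (Ne.symm hb : ¬ u = b)]
    · intro h
      exact absurd (Finset.mem_range.mpr (by omega)) h
  have hcoe : ∀ d ∈ r.divisors, PowerSeries.coeff (R := ℚ) j ((expandPS d f) ^ (r / d))
      = ((((Polynomial.expand ℤ d g) ^ (r / d)).coeff j : ℤ) : ℚ) := by
    intro d hd
    have hd0 : 0 < d := Nat.pos_of_mem_divisors hd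
    set B : Polynomial ℚ := (Polynomial.expand ℤ d g).map (Int.castRingHom ℚ) with hB
    have hdiff : (PowerSeries.X : PowerSeries ℚ) ^ (j + 1) ∣
        expandPS d f - (B : PowerSeries ℚ) := by
      rw [PowerSeries.X_pow_dvd_iff]
      intro m hm
      rw [map_sub]
      have h1 : PowerSeries.coeff (R := ℚ) m (expandPS d f)
          = if d ∣ m then PowerSeries.coeff (R := ℚ) (m / d) f else 0 := by
        simp [expandPS]
      have h2 : PowerSeries.coeff (R := ℚ) m (B : PowerSeries ℚ) = B.coeff m :=
        Polynomial.coeff_coe _ _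
      rw [h1, h2, hB, Polynomial.coeff_map, Polynomial.coeff_expand hd0]
      split
      · next hdm =>
          rw [hn (m / d), hgc (m / d) (le_trans (Nat.div_le_self m d) (by omega))]
          simp
      · simp
    have hdvd := dvd_trans hdiff
      (sub_dvd_pow_sub_pow (expandPS d f) ((B : PowerSeries ℚ)) (r / d))
    rw [PowerSeries.X_pow_dvd_iff] at hdvd
    have hj := hdvd j (by omega)
    rw [map_sub, sub_eq_zero] at hj
    rw [hj, ← Polynomial.coe_pow, Polynomial.coeff_coe, ← Polynomial.map_pow,
      Polynomial.coeff_map]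
    rfl
  have hkey : (r : ℤ) ∣
      (∑ d ∈ r.divisors, ((ArithmeticFunction.moebius d : ℤ)) • (Polynomial.expand ℤ d g) ^ (r / d)).coeff j :=
    key_dvd g r hr j
  set c : ℤ := (∑ d ∈ r.divisors, ((ArithmeticFunction.moebius d : ℤ)) • (Polynomial.expand ℤ d g) ^ (r / d)).coeff j
    with hc
  refine ⟨c / r, ?_⟩
  have hwc : PowerSeries.coeff (R := ℚ) j (witt f r) = (1 / (r : ℚ)) * (c : ℚ) := by
    rw [witt, map_smul, map_sum, smul_eq_mul]
    congr 1
    rw [hc, Polynomial.finset_sum_coeff]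
    push_cast
    refine Finset.sum_congr rfl fun d hd => ?_
    rw [map_smul, smul_eq_mul, hcoe d hd, Polynomial.coeff_smul, smul_eq_mul]
    push_cast
    ring
  rw [hwc]
  obtain ⟨q, hq⟩ := hkey
  rw [hq, Int.mul_ediv_cancel_left _ (by exact_mod_cast (by omega : r ≠ 0))]
  push_cast
  field_simp
end

section
/- Let j ≥ 1 and r ≥ 1 be integers. If r ≡ 2 (mod 4) and j is odd, then H_j^{(r)} = G_j^{(r)} + G_{(j+1)/2}^{(r/2)}; otherwise H_j^{(r)} = G_j^{(r)}. -/
/-- The convoluted convolved Fibonacci numbers: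
`Gfib r m = G_{m+1}^{(r)} = (1/r) ∑_{d ∣ gcd(r,m)} μ(d) F_{m/d+1}^{(r/d)}`. -/
noncomputable def Gfib (r m : ℕ) : ℚ :=
  (1 / (r : ℚ)) * ∑ d ∈ (Nat.gcd r m).divisors,
    ((ArithmeticFunction.moebius d : ℤ) : ℚ) * convFib (r / d) (m / d)

/-- The sign twisted convoluted convolved Fibonacci numbers:
`Hfib r m = H_{m+1}^{(r)} = ((-1)^r/r) ∑_{d ∣ gcd(r,m)} μ(d) (-1)^{r/d} F_{m/d+1}^{(r/d)}`. -/
noncomputable def Hfib (r m : ℕ) : ℚ :=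
  ((-1 : ℚ) ^ r / (r : ℚ)) * ∑ d ∈ (Nat.gcd r m).divisors,
    ((ArithmeticFunction.moebius d : ℤ) : ℚ) * (-1 : ℚ) ^ (r / d) * convFib (r / d) (m / d)

lemma sum_divisors_two_mul (g : ℕ) (hg : g ≠ 0) (hodd : Odd g) (f : ℕ → ℚ) :
    ∑ d ∈ (2 * g).divisors, f d =
      ∑ e ∈ g.divisors, f e + ∑ e ∈ g.divisors, f (2 * e) := by
  have hdisj : Disjoint g.divisors (g.divisors.image (2 * ·)) := by
    rw [Finset.disjoint_right]
    intro d hd hd'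
    obtain ⟨e, _, rfl⟩ := Finset.mem_image.mp hd
    have h2 : (2 : ℕ) ∣ g := dvd_trans ⟨e, rfl⟩ (Nat.dvd_of_mem_divisors hd')
    rw [Nat.odd_iff] at hodd
    omega
  have hset : (2 * g).divisors = g.divisors ∪ g.divisors.image (2 * ·) := by
    ext d
    simp only [Nat.mem_divisors, Finset.mem_union, Finset.mem_image]
    constructor
    · rintro ⟨hdvd, h0⟩
      rcases Nat.even_or_odd d with hde | hdo
      · obtain ⟨e, rfl⟩ := hde
        right
        refine ⟨e, ⟨?_, hg⟩, by ring⟩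
        obtain ⟨c, hc⟩ := hdvd
        exact ⟨c, Nat.eq_of_mul_eq_mul_left (by norm_num : 0 < 2) (by rw [hc]; ring)⟩
      · left
        exact ⟨Nat.Coprime.dvd_of_dvd_mul_left hdo.coprime_two_right hdvd, hg⟩
    · rintro (⟨h, _⟩ | ⟨e, ⟨he, _⟩, rfl⟩)
      · exact ⟨h.mul_left 2, by positivity⟩
      · exact ⟨Nat.mul_dvd_mul_left 2 he, by positivity⟩
  rw [hset, Finset.sum_union hdisj, Finset.sum_image]
  intro a _ b _ h
  simp only at h
  omega

open ArithmeticFunction in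
lemma moebius_two_mul (e : ℕ) (he : Odd e) :
    (ArithmeticFunction.moebius (2 * e) : ℤ) = - ArithmeticFunction.moebius e := by
  rw [isMultiplicative_moebius.map_mul_of_coprime he.coprime_two_left,
    moebius_apply_prime Nat.prime_two]
  ring

/-- Proposition 1, part 3): for `j, r ≥ 1`,
`H_j^{(r)} = G_j^{(r)} + G_{(j+1)/2}^{(r/2)}` if `r ≡ 2 (mod 4)` and `j` is odd,
and `H_j^{(r)} = G_j^{(r)}` otherwise.
(Here `G_j^{(r)} = Gfib r (j-1)` and `H_j^{(r)} = Hfib r (j-1)`.) -/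
theorem Hfib_eq_Gfib (j r : ℕ) (hj : 1 ≤ j) (hr : 1 ≤ r) :
    Hfib r (j - 1) =
      if r % 4 = 2 ∧ j % 2 = 1 then
        Gfib r (j - 1) + Gfib (r / 2) ((j + 1) / 2 - 1)
      else Gfib r (j - 1) := by
  set m := j - 1 with hm
  by_cases hc : r % 4 = 2 ∧ j % 2 = 1
  · rw [if_pos hc]
    obtain ⟨hr4, hj2⟩ := hc
    obtain ⟨r', hr'⟩ : ∃ r', r = 2 * r' := ⟨r / 2, by omega⟩
    obtain ⟨m', hm'⟩ : ∃ m', m = 2 * m' := ⟨m / 2, by omega⟩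
    have hr'odd : Odd r' := by rw [Nat.odd_iff]; omega
    have hr'pos : 0 < r' := by omega
    have hr2 : r / 2 = r' := by omega
    have hj' : (j + 1) / 2 - 1 = m' := by omega
    rw [hr2, hj']
    have hg : Nat.gcd r m = 2 * Nat.gcd r' m' := by rw [hr', hm', Nat.gcd_mul_left]
    have hg'dvd : Nat.gcd r' m' ∣ r' := Nat.gcd_dvd_left _ _
    have hg'odd : Odd (Nat.gcd r' m') := hr'odd.of_dvd_nat hg'dvd
    have hg'ne : Nat.gcd r' m' ≠ 0 := Nat.gcd_ne_zero_left (by omega)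
    unfold Hfib Gfib
    rw [hg, sum_divisors_two_mul _ hg'ne hg'odd, sum_divisors_two_mul _ hg'ne hg'odd]
    have hSH1 : ∀ e ∈ (Nat.gcd r' m').divisors,
        ((ArithmeticFunction.moebius e : ℤ) : ℚ) * (-1 : ℚ) ^ (r / e) * convFib (r / e) (m / e)
        = ((ArithmeticFunction.moebius e : ℤ) : ℚ) * convFib (r / e) (m / e) := by
      intro e he
      have hedvd : e ∣ r' := dvd_trans (Nat.dvd_of_mem_divisors he) hg'dvd
      have hre : r / e = 2 * (r' / e) := by rw [hr', Nat.mul_div_assoc 2 hedvd]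
      rw [hre, pow_mul, neg_one_sq, one_pow, mul_one]
    have hSH2 : ∀ e ∈ (Nat.gcd r' m').divisors,
        ((ArithmeticFunction.moebius (2 * e) : ℤ) : ℚ) * (-1 : ℚ) ^ (r / (2 * e)) *
          convFib (r / (2 * e)) (m / (2 * e))
        = ((ArithmeticFunction.moebius e : ℤ) : ℚ) * convFib (r' / e) (m' / e) := by
      intro e he
      have hedvd : e ∣ r' := dvd_trans (Nat.dvd_of_mem_divisors he) hg'dvd
      have heodd : Odd e := hg'odd.of_dvd_nat (Nat.dvd_of_mem_divisors he)
      have hre : r / (2 * e) = r' / e := by rw [hr', Nat.mul_div_mul_left _ _ (by norm_num)]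
      have hme : m / (2 * e) = m' / e := by rw [hm', Nat.mul_div_mul_left _ _ (by norm_num)]
      have hqodd : Odd (r' / e) := hr'odd.of_dvd_nat (Nat.div_dvd_of_dvd hedvd)
      rw [hre, hme, moebius_two_mul e heodd, hqodd.neg_one_pow]
      push_cast
      ring
    have hSG2 : ∀ e ∈ (Nat.gcd r' m').divisors,
        ((ArithmeticFunction.moebius (2 * e) : ℤ) : ℚ) * convFib (r / (2 * e)) (m / (2 * e))
        = -(((ArithmeticFunction.moebius e : ℤ) : ℚ) * convFib (r' / e) (m' / e)) := by
      intro e he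
      have heodd : Odd e := hg'odd.of_dvd_nat (Nat.dvd_of_mem_divisors he)
      have hre : r / (2 * e) = r' / e := by rw [hr', Nat.mul_div_mul_left _ _ (by norm_num)]
      have hme : m / (2 * e) = m' / e := by rw [hm', Nat.mul_div_mul_left _ _ (by norm_num)]
      rw [hre, hme, moebius_two_mul e heodd]
      push_cast
      ring
    rw [Finset.sum_congr rfl hSH1, Finset.sum_congr rfl hSH2, Finset.sum_congr rfl hSG2,
      Finset.sum_neg_distrib]
    have hreven : (-1 : ℚ) ^ r = 1 := by
      rw [hr', pow_mul, neg_one_sq, one_pow]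
    rw [hreven]
    have hrq : (r : ℚ) = 2 * (r' : ℚ) := by rw [hr']; push_cast; ring
    rw [hrq]
    have hr'q : (r' : ℚ) ≠ 0 := by positivity
    field_simp
    ring
  · rw [if_neg hc]
    unfold Hfib Gfib
    rw [show ((-1 : ℚ) ^ r / (r : ℚ)) = (1 / (r : ℚ)) * (-1) ^ r by ring, mul_assoc,
      Finset.mul_sum]
    congr 1
    refine Finset.sum_congr rfl fun d hd => ?_
    by_cases hμ : ArithmeticFunction.moebius d = 0
    · simp [hμ]
    have hsq : Squarefree d := ArithmeticFunction.moebius_ne_zero_iff_squarefree.mp hμ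
    have hdr : d ∣ r := (Nat.dvd_of_mem_divisors hd).trans (Nat.gcd_dvd_left r m)
    have hq : r / d * d = r := Nat.div_mul_cancel hdr
    have heven : Even (r + r / d) := by
      rcases (by omega : r % 2 = 1 ∨ r % 4 = 0 ∨ (r % 4 = 2 ∧ j % 2 = 0)) with h1 | h1 | ⟨h1, h2⟩
      · have hro : Odd r := Nat.odd_iff.mpr h1
        have hqo : Odd (r / d) := by
          have h2 : Odd (r / d * d) := by rw [hq]; exact hro
          exact (Nat.odd_mul.mp h2).1
        exact hro.add_odd hqo
      · have hre : Even r := Nat.even_iff.mpr (by omega)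
        have hqe : Even (r / d) := by
          by_contra hqo
          have hqo : Odd (r / d) := Nat.not_even_iff_odd.mp hqo
          have hcop : Nat.Coprime (2 ^ 2) (r / d) := (hqo.coprime_two_left).pow_left 2
          have h4 : 2 ^ 2 ∣ r := by norm_num; omega
          have h4' : 2 ^ 2 ∣ r / d * d := by rw [hq]; exact h4
          have h4d : 2 ^ 2 ∣ d := hcop.dvd_of_dvd_mul_left h4'
          have := hsq 2 (by rw [show (2 : ℕ) * 2 = 2 ^ 2 by norm_num]; exact h4d)
          rw [Nat.isUnit_iff] at this
          omega
        exact hre.add hqe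
      · have hmodd : Odd m := Nat.odd_iff.mpr (by omega)
        have hdo : Odd d :=
          hmodd.of_dvd_nat ((Nat.dvd_of_mem_divisors hd).trans (Nat.gcd_dvd_right r m))
        have hre : Even r := Nat.even_iff.mpr (by omega)
        have hqe : Even (r / d) := by
          have h2 : Even (r / d * d) := by rw [hq]; exact hre
          rcases Nat.even_mul.mp h2 with h | h
          · exact h
          · exact absurd h (Nat.not_even_iff_odd.mpr hdo)
        exact hre.add hqe
    have hsign : (-1 : ℚ) ^ r * (-1 : ℚ) ^ (r / d) = 1 := by
      rw [← pow_add]; exact heven.neg_one_pow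
    calc (-1 : ℚ) ^ r * (((ArithmeticFunction.moebius d : ℤ) : ℚ) * (-1 : ℚ) ^ (r / d) *
            convFib (r / d) (m / d))
        = ((-1 : ℚ) ^ r * (-1 : ℚ) ^ (r / d)) *
            (((ArithmeticFunction.moebius d : ℤ) : ℚ) * convFib (r / d) (m / d)) := by ring
      _ = ((ArithmeticFunction.moebius d : ℤ) : ℚ) * convFib (r / d) (m / d) := by
            rw [hsign, one_mul]
end

section
/- For every integer j ≥ 2 there exists a polynomial A ∈ ℤ[X] which is monic of degree j, satisfies A(0) = 0, and whose coefficient of X^{j−1} equals 3j(j−1)/2, such that for every integer r ≥ 1 one has j! · F_{j+1}^{(r)} = A(r). -/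
open Finset Finset.Nat Nat Polynomial

lemma CF_sum_adT_succ (g : ℕ → ℕ) (r m : ℕ) :
    ∑ t ∈ antidiagonalTuple (r+1) m, ∏ i, g (t i)
      = ∑ p ∈ antidiagonal m, g p.1 * ∑ t ∈ antidiagonalTuple r p.2, ∏ i, g (t i) := by
  have : ∀ p ∈ antidiagonal m, g p.1 * ∑ t ∈ antidiagonalTuple r p.2, ∏ i, g (t i)
      = ∑ t ∈ antidiagonalTuple r p.2, ∏ i : Fin (r+1), g ((Fin.cons p.1 t : Fin (r+1) → ℕ) i) := by
    intro p hp
    rw [Finset.mul_sum]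
    refine Finset.sum_congr rfl fun t ht => ?_
    rw [Fin.prod_univ_succ]
    simp
  rw [Finset.sum_congr rfl this, Finset.sum_sigma']
  refine (Finset.sum_nbij' (fun x => (Fin.cons x.1.1 x.2 : Fin (r+1) → ℕ))
    (fun f => ⟨(f 0, ∑ i, Fin.tail f i), Fin.tail f⟩) ?_ ?_ ?_ ?_ ?_).symm
  · rintro ⟨⟨a,b⟩, t⟩ h
    simp only [Finset.mem_sigma, Finset.HasAntidiagonal.mem_antidiagonal, mem_antidiagonalTuple] at h ⊢
    rw [Fin.sum_cons, h.2, h.1]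
  · intro f hf
    simp only [mem_antidiagonalTuple] at hf
    simp only [Finset.mem_sigma, Finset.HasAntidiagonal.mem_antidiagonal, mem_antidiagonalTuple]
    refine ⟨?_, trivial⟩
    rw [← hf, Fin.sum_univ_succ]
    rfl
  · rintro ⟨⟨a,b⟩, t⟩ h
    simp only [Finset.mem_sigma, Finset.HasAntidiagonal.mem_antidiagonal, mem_antidiagonalTuple] at h
    simp only [Fin.cons_zero, Fin.tail_cons]
    congr 1
    · exact Prod.ext rfl h.2
  · intro f hf
    simp [Fin.cons_self_tail]
  · rintro ⟨⟨a,b⟩, t⟩ h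
    rfl

lemma CF_convFib_succ (r m : ℕ) :
    convFib (r+1) m = ∑ p ∈ antidiagonal m, fib (p.1+1) * convFib r p.2 :=
  CF_sum_adT_succ (fun n => fib (n+1)) r m

@[simp] lemma CF_convFib_zero_right (r : ℕ) : convFib r 0 = 1 := by
  simp [convFib, antidiagonalTuple_zero_right]

@[simp] lemma CF_convFib_one_left (m : ℕ) : convFib 1 m = fib (m+1) := by
  simp [convFib]

lemma CF_convFib_succ_one (r : ℕ) : convFib (r+1) 1 = convFib r 1 + 1 := by
  rw [CF_convFib_succ]
  rw [Finset.Nat.sum_antidiagonal_succ]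
  simp [Finset.Nat.antidiagonal_zero]

@[simp] lemma CF_convFib_one_right (r : ℕ) : convFib r 1 = r := by
  induction r with
  | zero => simp [convFib]
  | succ n ih => rw [CF_convFib_succ_one, ih]

lemma CF_convFib_rec (r m : ℕ) :
    convFib (r+1) (m+2) = convFib r (m+2) + convFib (r+1) (m+1) + convFib (r+1) m := by
  have h1 : convFib (r+1) (m+2)
      = convFib r (m+2) + ∑ p ∈ antidiagonal (m+1), fib (p.1+2) * convFib r p.2 := by
    rw [CF_convFib_succ, Finset.Nat.sum_antidiagonal_succ]
    simp only [Nat.zero_add, Nat.fib_one, one_mul]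
  have h2 : ∀ p : ℕ × ℕ, fib (p.1+2) * convFib r p.2
      = fib (p.1+1) * convFib r p.2 + fib p.1 * convFib r p.2 := by
    intro p; rw [fib_add_two, add_mul]; ring
  rw [h1, Finset.sum_congr rfl (fun p _ => h2 p), Finset.sum_add_distrib, ← CF_convFib_succ]
  have h3 : ∑ p ∈ antidiagonal (m+1), fib p.1 * convFib r p.2
      = convFib (r+1) m := by
    rw [Finset.Nat.sum_antidiagonal_succ, CF_convFib_succ]
    simp
  rw [h3, add_assoc]

/-- the binomial sum `∑ C(k, m-k) C(r+k, k)`. -/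
def CF_Msum (r m : ℕ) : ℕ := ∑ k ∈ range (m+1), k.choose (m-k) * (r+k).choose k

lemma CF_Ssum_rec (m : ℕ) :
    ∑ k ∈ range (m+3), k.choose (m+2-k)
      = ∑ k ∈ range (m+2), k.choose (m+1-k) + ∑ k ∈ range (m+1), k.choose (m-k) := by
  have L : ∑ k ∈ range (m+3), k.choose (m+2-k)
      = (∑ k ∈ range (m+1), k.choose (m-k)) + (∑ k ∈ range (m+1), k.choose (m+1-k)) + 1 := by
    rw [Finset.sum_range_succ' (fun k => k.choose (m+2-k))]
    simp only [Nat.choose_zero_succ, Nat.succ_sub_succ, add_zero]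
    rw [Finset.sum_range_succ (fun k => (k+1).choose (m+1-k))]
    have : ∀ k ∈ range (m+1), (k+1).choose (m+1-k)
        = k.choose (m-k) + k.choose (m+1-k) := by
      intro k hk
      rw [Finset.mem_range] at hk
      rw [show m+1-k = (m-k)+1 by omega, Nat.choose_succ_succ]
    rw [Finset.sum_congr rfl this, Finset.sum_add_distrib]
    simp
  have R : ∑ k ∈ range (m+2), k.choose (m+1-k)
      = (∑ k ∈ range (m+1), k.choose (m+1-k)) + 1 := by
    rw [Finset.sum_range_succ (fun k => k.choose (m+1-k))]
    simp
  rw [L, R]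
  omega

lemma CF_Msum_rec (r m : ℕ) :
    CF_Msum (r+1) (m+2) = CF_Msum r (m+2) + CF_Msum (r+1) (m+1) + CF_Msum (r+1) m := by
  have pas : ∀ k, (r+1+(k+1)).choose (k+1) = (r+(k+1)).choose (k+1) + (r+1+k).choose k := by
    intro k
    rw [show r+1+(k+1) = (r+k+1)+1 by ring, Nat.choose_succ_succ,
        show r+k+1 = r+1+k by ring, add_comm]
    congr 2
    ring
  have hb : ∑ k ∈ range (m+3), k.choose (m+2-k) * (r+k).choose k
      = ∑ k ∈ range (m+2), (k+1).choose (m+1-k) * (r+(k+1)).choose (k+1) := by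
    rw [Finset.sum_range_succ' (fun k => k.choose (m+2-k) * (r+k).choose k)]
    simp only [Nat.sub_zero, Nat.choose_zero_succ, Nat.succ_sub_succ, zero_mul, add_zero]
  have hc : ∑ k ∈ range (m+2), (k+1).choose (m+1-k) * (r+1+k).choose k
      = (∑ k ∈ range (m+1), k.choose (m-k) * (r+1+k).choose k)
        + (∑ k ∈ range (m+1), k.choose (m+1-k) * (r+1+k).choose k)
        + (r+m+2).choose (m+1) := by
    rw [Finset.sum_range_succ (fun k => (k+1).choose (m+1-k) * (r+1+k).choose k)]
    have e2 : ∀ k ∈ range (m+1), (k+1).choose (m+1-k) * (r+1+k).choose k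
        = k.choose (m-k) * (r+1+k).choose k + k.choose (m+1-k) * (r+1+k).choose k := by
      intro k hk
      rw [Finset.mem_range] at hk
      rw [show m+1-k = (m-k)+1 by omega, Nat.choose_succ_succ, Nat.add_mul]
    rw [Finset.sum_congr rfl e2, Finset.sum_add_distrib,
        show r+1+(m+1) = r+m+2 by ring, show m+1-(m+1) = 0 by omega]
    simp only [Nat.choose_zero_right, one_mul]
  have L : ∑ k ∈ range (m+3), k.choose (m+2-k) * (r+1+k).choose k
      = (∑ k ∈ range (m+3), k.choose (m+2-k) * (r+k).choose k)
        + ((∑ k ∈ range (m+1), k.choose (m-k) * (r+1+k).choose k)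
          + (∑ k ∈ range (m+1), k.choose (m+1-k) * (r+1+k).choose k)
          + (r+m+2).choose (m+1)) := by
    rw [Finset.sum_range_succ' (fun k => k.choose (m+2-k) * (r+1+k).choose k)]
    simp only [Nat.sub_zero, Nat.choose_zero_succ, Nat.succ_sub_succ, zero_mul, add_zero]
    have e1 : ∀ k ∈ range (m+2), (k+1).choose (m+1-k) * (r+1+(k+1)).choose (k+1)
        = (k+1).choose (m+1-k) * (r+(k+1)).choose (k+1)
          + (k+1).choose (m+1-k) * (r+1+k).choose k := by
      intro k hk; rw [pas k, Nat.mul_add]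
    rw [Finset.sum_congr rfl e1, Finset.sum_add_distrib, hb, hc]
  have R : ∑ k ∈ range (m+2), k.choose (m+1-k) * (r+1+k).choose k
      = (∑ k ∈ range (m+1), k.choose (m+1-k) * (r+1+k).choose k)
        + (r+m+2).choose (m+1) := by
    rw [Finset.sum_range_succ (fun k => k.choose (m+1-k) * (r+1+k).choose k),
        show r+1+(m+1) = r+m+2 by ring, show m+1-(m+1) = 0 by omega]
    simp only [Nat.choose_zero_right, one_mul]
  show ∑ k ∈ range (m+3), k.choose (m+2-k) * (r+1+k).choose k
      = (∑ k ∈ range (m+3), k.choose (m+2-k) * (r+k).choose k)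
        + (∑ k ∈ range (m+2), k.choose (m+1-k) * (r+1+k).choose k)
        + (∑ k ∈ range (m+1), k.choose (m-k) * (r+1+k).choose k)
  rw [L, R]
  omega

lemma CF_fib_eq_sum (m : ℕ) : fib (m+1) = ∑ k ∈ range (m+1), k.choose (m-k) := by
  induction m using Nat.strong_induction_on with
  | _ m ih =>
    match m with
    | 0 => simp
    | 1 => decide
    | (n+2) =>
      rw [show n+2+1 = (n+1)+2 by ring, fib_add_two, ih (n+1) (by omega), ih n (by omega)]
      rw [show n+1+2 = n+3 by ring, show n+1+1 = n+2 by ring, CF_Ssum_rec n, Nat.add_comm]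

lemma CF_Msum_zero_left (m : ℕ) : CF_Msum 0 m = ∑ k ∈ range (m+1), k.choose (m-k) := by
  unfold CF_Msum
  simp

@[simp] lemma CF_Msum_zero_right (r : ℕ) : CF_Msum r 0 = 1 := by
  simp [CF_Msum]

@[simp] lemma CF_Msum_one_right (r : ℕ) : CF_Msum r 1 = r + 1 := by
  unfold CF_Msum
  rw [Finset.sum_range_succ, Finset.sum_range_one]
  simp

lemma CF_convFib_eq_Msum (r m : ℕ) : convFib (r+1) m = CF_Msum r m := by
  induction r generalizing m with
  | zero =>
    rw [CF_convFib_one_left, CF_fib_eq_sum, CF_Msum_zero_left]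
  | succ r ih =>
    induction m using Nat.strong_induction_on with
    | _ m ihm =>
      match m with
      | 0 => simp
      | 1 => simp
      | (n+2) =>
        rw [CF_convFib_rec, CF_Msum_rec, ih (n+2), ihm (n+1) (by omega), ihm n (by omega)]

lemma CF_asc_coeff (n : ℕ) : 2 * (ascPochhammer ℤ (n+1)).coeff n = (n+1) * n := by
  induction n with
  | zero => simp
  | succ n ih =>
    rw [ascPochhammer_succ_right, ← Polynomial.C_eq_natCast, mul_add,
      Polynomial.coeff_add, Polynomial.coeff_mul_X, Polynomial.coeff_mul_C]
    have hm : (ascPochhammer ℤ (n+1)).coeff (n+1) = 1 := by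
      have := (monic_ascPochhammer ℤ (n+1)).coeff_natDegree
      rwa [ascPochhammer_natDegree] at this
    rw [hm, one_mul, mul_add, ih]
    push_cast
    ring

/-- Theorem (voorlaatste): for every `j ≥ 2` there is a monic polynomial
`A ∈ ℤ[X]` of degree `j` with `A(0) = 0` whose coefficient of `X^{j-1}` equals
`3 j (j-1) / 2`, such that `j! · F_{j+1}^{(r)} = A(r)` for every `r ≥ 1`. -/
theorem factorial_mul_convFib_eq_poly (j : ℕ) (hj : 2 ≤ j) :
    ∃ A : Polynomial ℤ, A.Monic ∧ A.natDegree = j ∧ A.eval 0 = 0 ∧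
      2 * A.coeff (j - 1) = 3 * j * (j - 1) ∧
      ∀ r : ℕ, 1 ≤ r → (Nat.factorial j : ℤ) * convFib r j = A.eval (r : ℤ) := by
  have hjpos : 0 < j := by omega
  set c : ℕ → ℕ := fun k => k.choose (j-k) * (j.factorial / k.factorial) with hcdef
  have hcj : ∀ k, k ≤ j → (k = j → False) → k.choose (j-k) * (j.factorial / k.factorial) = c k :=
    fun k _ _ => rfl
  have hctop : c j = 1 := by
    simp [hcdef, Nat.sub_self, Nat.div_self (Nat.factorial_pos j)]
  have hasc : ∀ k : ℕ, (ascPochhammer ℤ k).degree = (k : WithBot ℕ) := by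
    intro k
    rw [Polynomial.degree_eq_natDegree (monic_ascPochhammer ℤ k).ne_zero,
      ascPochhammer_natDegree]
  have hsplit : ∑ k ∈ range (j+1), Polynomial.C ((c k : ℕ) : ℤ) * ascPochhammer ℤ k
      = (∑ k ∈ range j, Polynomial.C ((c k : ℕ) : ℤ) * ascPochhammer ℤ k)
        + ascPochhammer ℤ j := by
    rw [Finset.sum_range_succ, hctop]
    simp
  have hB : (∑ k ∈ range j, Polynomial.C ((c k : ℕ) : ℤ) * ascPochhammer ℤ k).degree
      < ((j : ℕ) : WithBot ℕ) := by
    refine lt_of_le_of_lt (Polynomial.degree_sum_le _ _) ?_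
    rw [Finset.sup_lt_iff (by exact_mod_cast WithBot.bot_lt_coe j)]
    intro k hk
    refine lt_of_le_of_lt (Polynomial.degree_mul_le _ _) ?_
    calc (Polynomial.C ((c k : ℕ) : ℤ)).degree + (ascPochhammer ℤ k).degree
        ≤ 0 + (k : WithBot ℕ) := by
          gcongr
          · exact Polynomial.degree_C_le
          · rw [hasc k]
      _ = (k : WithBot ℕ) := by rw [zero_add]
      _ < ((j : ℕ) : WithBot ℕ) := by exact_mod_cast Finset.mem_range.mp hk
  have hB' : (∑ k ∈ range j, Polynomial.C ((c k : ℕ) : ℤ) * ascPochhammer ℤ k).degree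
      < (ascPochhammer ℤ j).degree := by rw [hasc j]; exact hB
  refine ⟨∑ k ∈ range (j+1), Polynomial.C ((c k : ℕ) : ℤ) * ascPochhammer ℤ k, ?_, ?_, ?_, ?_, ?_⟩
  · -- Monic
    rw [hsplit]
    exact (monic_ascPochhammer ℤ j).add_of_right hB'
  · -- natDegree
    rw [hsplit]
    exact Polynomial.natDegree_eq_of_degree_eq_some
      (by rw [Polynomial.degree_add_eq_right_of_degree_lt hB', hasc j])
  · -- eval 0
    rw [Polynomial.eval_finset_sum]
    refine Finset.sum_eq_zero fun k hk => ?_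
    rw [Polynomial.eval_mul, Polynomial.eval_C]
    rcases Nat.eq_zero_or_pos k with h0 | hpos
    · subst h0
      have : c 0 = 0 := by
        simp [hcdef, Nat.choose_eq_zero_of_lt hjpos]
      rw [this]
      simp
    · rw [ascPochhammer_ne_zero_eval_zero (S := ℤ) (by omega : k ≠ 0), mul_zero]
  · -- coefficient of X^(j-1)
    obtain ⟨n, rfl⟩ : ∃ n, j = n+2 := ⟨j-2, by omega⟩
    show 2 * (∑ k ∈ range (n+3), Polynomial.C ((c k : ℕ) : ℤ) * ascPochhammer ℤ k).coeff (n+1)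
        = 3 * ((n+2 : ℕ) : ℤ) * (((n+2 : ℕ) : ℤ) - 1)
    rw [Polynomial.finset_sum_coeff, Finset.sum_range_succ, Finset.sum_range_succ]
    have hz : ∑ k ∈ range (n+1),
        (Polynomial.C ((c k : ℕ) : ℤ) * ascPochhammer ℤ k).coeff (n+1) = 0 := by
      refine Finset.sum_eq_zero fun k hk => ?_
      rw [Polynomial.coeff_C_mul, Polynomial.coeff_eq_zero_of_natDegree_lt, mul_zero]
      rw [ascPochhammer_natDegree]
      exact Finset.mem_range.mp hk
    have hm1 : (ascPochhammer ℤ (n+1)).coeff (n+1) = 1 := by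
      have := (monic_ascPochhammer ℤ (n+1)).coeff_natDegree
      rwa [ascPochhammer_natDegree] at this
    have hcn : c (n+1) = (n+1) * (n+2) := by
      have h1 : (n+2) - (n+1) = 1 := by omega
      have h2 : (n+2).factorial / (n+1).factorial = n+2 := by
        rw [Nat.factorial_succ]
        exact Nat.mul_div_cancel _ (Nat.factorial_pos _)
      simp [hcdef, h1, h2, Nat.choose_one_right]
    have hc2 : c (n+2) = 1 := hctop
    have h2 := CF_asc_coeff (n+1)
    rw [Polynomial.coeff_C_mul, Polynomial.coeff_C_mul, hz, hm1, hcn, hc2]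
    push_cast at *
    linarith
  · -- evaluation
    intro r hr
    obtain ⟨s, rfl⟩ : ∃ s, r = s+1 := ⟨r-1, by omega⟩
    rw [CF_convFib_eq_Msum]
    have key : j.factorial * CF_Msum s j
        = ∑ k ∈ range (j+1), c k * (ascPochhammer ℕ k).eval (s+1) := by
      unfold CF_Msum
      rw [Finset.mul_sum]
      refine Finset.sum_congr rfl fun k hk => ?_
      have hk' : k ≤ j := by
        have := Finset.mem_range.mp hk; omega
      rw [ascPochhammer_nat_eq_ascFactorial, Nat.ascFactorial_eq_factorial_mul_choose]
      calc j.factorial * (k.choose (j-k) * (s+k).choose k)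
          = k.choose (j-k) * ((j.factorial / k.factorial) * k.factorial) * (s+k).choose k := by
            rw [Nat.div_mul_cancel (Nat.factorial_dvd_factorial hk')]
            ring
        _ = c k * (k.factorial * (s+k).choose k) := by
            rw [hcdef]
            ring
    rw [Polynomial.eval_finset_sum]
    simp only [Polynomial.eval_mul, Polynomial.eval_C]
    have hev : ∀ k, (ascPochhammer ℤ k).eval ((Nat.cast (s+1) : ℤ))
        = (((ascPochhammer ℕ k).eval (s+1) : ℕ) : ℤ) := fun k => (ascPochhammer_eval_cast (S := ℤ) k (s+1)).symm
    calc (j.factorial : ℤ) * (CF_Msum s j : ℤ)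
        = ((j.factorial * CF_Msum s j : ℕ) : ℤ) := by push_cast; ring
      _ = ((∑ k ∈ range (j+1), c k * (ascPochhammer ℕ k).eval (s+1) : ℕ) : ℤ) := by rw [key]
      _ = ∑ k ∈ range (j+1), ((c k : ℕ) : ℤ) * (ascPochhammer ℤ k).eval ((Nat.cast (s+1) : ℤ)) := by
          push_cast
          rfl
end

section
/- Let r ≥ 1 and let n_1, …, n_r be non-negative integers with n = n_1 + ⋯ + n_r ≥ 1. Then n!/(n_1! ⋯ n_r!) = Σ_{d | gcd(n_1, …, n_r)} (n/d) · M(n_1/d, n_2/d, …, n_r/d), where M is defined by M(m_1, …, m_r) = (1/m) Σ_{d | gcd(m_1, …, m_r)} μ(d) · (m/d)! / ((m_1/d)! ⋯ (m_r/d)!) with m = m_1 + ⋯ + m_r. -/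
/-- `Mword n = M(n_1, …, n_k) = (1/n) ∑_{d ∣ gcd(n_1,…,n_k)} μ(d) (n/d)! / ((n_1/d)!⋯(n_k/d)!)`
with `n = n_1 + ⋯ + n_k` (equal to `0` when all `n_i` vanish). -/
noncomputable def Mword {k : ℕ} (n : Fin k → ℕ) : ℚ :=
  (1 / ((∑ i, n i : ℕ) : ℚ)) * ∑ d ∈ (Finset.univ.gcd n).divisors,
    ((ArithmeticFunction.moebius d : ℤ) : ℚ) *
      (Nat.factorial ((∑ i, n i) / d) : ℚ) / ∏ i, (Nat.factorial (n i / d) : ℚ)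

/-- Rearranging a double divisor sum. -/
lemma sum_divisors_div_eq (g : ℕ) (hg : g ≠ 0) (h : ℕ → ℕ → ℚ) :
    ∑ d ∈ g.divisors, ∑ e ∈ (g / d).divisors, h d e
      = ∑ m ∈ g.divisors, ∑ e ∈ m.divisors, h (m / e) e := by
  rw [Finset.sum_sigma', Finset.sum_sigma']
  refine Finset.sum_nbij' (fun p => ⟨p.1 * p.2, p.2⟩) (fun p => ⟨p.1 / p.2, p.2⟩)
    ?_ ?_ ?_ ?_ ?_
  · rintro ⟨d, e⟩ hp
    simp only [Finset.mem_sigma, Nat.mem_divisors] at hp ⊢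
    obtain ⟨⟨hd, -⟩, he, -⟩ := hp
    have hde : d * e ∣ g := (Nat.dvd_div_iff_mul_dvd hd).1 he
    have hde0 : d * e ≠ 0 := fun h0 => hg (Nat.eq_zero_of_zero_dvd (h0 ▸ hde))
    exact ⟨⟨hde, hg⟩, dvd_mul_left e d, hde0⟩
  · rintro ⟨m, e⟩ hp
    simp only [Finset.mem_sigma, Nat.mem_divisors] at hp ⊢
    obtain ⟨⟨hm, -⟩, he, hm0⟩ := hp
    have hdvd : m / e ∣ g := dvd_trans (Nat.div_dvd_of_dvd he) hm
    have he0 : e ≠ 0 := fun h0 => hm0 (Nat.eq_zero_of_zero_dvd (h0 ▸ he))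
    have hme0 : m / e ≠ 0 :=
      Nat.pos_iff_ne_zero.1 (Nat.div_pos (Nat.le_of_dvd (Nat.pos_of_ne_zero hm0) he)
        (Nat.pos_of_ne_zero he0))
    refine ⟨⟨hdvd, hg⟩, ?_, Nat.pos_iff_ne_zero.1 (Nat.div_pos
      (Nat.le_of_dvd (Nat.pos_of_ne_zero hg) hdvd) (Nat.pos_of_ne_zero hme0))⟩
    rw [Nat.dvd_div_iff_mul_dvd hdvd, Nat.div_mul_cancel he]
    exact hm
  · rintro ⟨d, e⟩ hp
    simp only [Finset.mem_sigma, Nat.mem_divisors] at hp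
    obtain ⟨-, hed, he0⟩ := hp
    have : e ≠ 0 := fun h0 => he0 (Nat.eq_zero_of_zero_dvd (h0 ▸ hed))
    simp [Nat.mul_div_cancel _ (Nat.pos_of_ne_zero this)]
  · rintro ⟨m, e⟩ hp
    simp only [Finset.mem_sigma, Nat.mem_divisors] at hp
    obtain ⟨_, he, _⟩ := hp
    simp [Nat.div_mul_cancel he]
  · rintro ⟨d, e⟩ hp
    simp only [Finset.mem_sigma, Nat.mem_divisors] at hp
    obtain ⟨-, hed, he0⟩ := hp
    have : e ≠ 0 := fun h0 => he0 (Nat.eq_zero_of_zero_dvd (h0 ▸ hed))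
    simp [Nat.mul_div_cancel _ (Nat.pos_of_ne_zero this)]

/-- `∑_{e ∣ m} μ(e) = [m = 1]` for `m ≠ 0`. -/
lemma sum_moebius_divisors (m : ℕ) (hm : m ≠ 0) :
    ∑ e ∈ m.divisors, (ArithmeticFunction.moebius e : ℤ) =
      if m = 1 then 1 else 0 := by
  rw [← ArithmeticFunction.coe_mul_zeta_apply, ArithmeticFunction.moebius_mul_coe_zeta,
    ArithmeticFunction.one_apply]

/-- Equation (witty): for `r + 1 ≥ 1` non-negative integers `n_0, …, n_r` with
`n = n_0 + ⋯ + n_r ≥ 1`,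
`n!/(n_0! ⋯ n_r!) = ∑_{d ∣ gcd(n_0,…,n_r)} (n/d) M(n_0/d, …, n_r/d)`. -/
theorem multinomial_eq_sum_Mword (r : ℕ) (n : Fin (r + 1) → ℕ) (h : 1 ≤ ∑ i, n i) :
    ((Nat.factorial (∑ i, n i) : ℚ) / ∏ i, (Nat.factorial (n i) : ℚ)) =
      ∑ d ∈ (Finset.univ.gcd n).divisors,
        (((∑ i, n i) / d : ℕ) : ℚ) * Mword (fun i => n i / d) := by
  set g := Finset.univ.gcd n with hgdef
  set N := ∑ i, n i with hNdef
  have hdvd : ∀ i, g ∣ n i := fun i => Finset.gcd_dvd (Finset.mem_univ i)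
  have hgN : g ∣ N := Finset.dvd_sum fun i _ => hdvd i
  have hg0 : g ≠ 0 := by
    intro h0
    have : N = 0 := by
      rw [hNdef]
      exact Finset.sum_eq_zero fun i _ => by
        have := hdvd i; rw [h0] at this; exact Nat.eq_zero_of_zero_dvd this
    omega
  -- key fact: sum and gcd scale under division by a divisor d of g
  have hsum : ∀ d ∈ g.divisors, (∑ i, n i / d) = N / d := by
    intro d hd
    have hdg : d ∣ g := (Nat.mem_divisors.1 hd).1
    have hd0 : d ≠ 0 := by rintro rfl; exact hg0 (Nat.eq_zero_of_zero_dvd hdg)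
    rw [hNdef, Nat.sum_div fun i _ => hdg.trans (hdvd i)]
  have hgcd : ∀ d ∈ g.divisors, Finset.univ.gcd (fun i => n i / d) = g / d := by
    intro d hd
    have hdg : d ∣ g := (Nat.mem_divisors.1 hd).1
    have hd0 : 0 < d := Nat.pos_of_ne_zero (by rintro rfl; exact hg0 (Nat.eq_zero_of_zero_dvd hdg))
    have key : (Finset.univ.gcd fun i => d * (n i / d)) = d * Finset.univ.gcd (fun i => n i / d) := by
      simpa using (Finset.gcd_mul_left (s := (Finset.univ : Finset (Fin (r+1))))
        (f := fun i => n i / d) (a := d))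
    have : g = d * Finset.univ.gcd (fun i => n i / d) := by
      rw [← key]
      apply Finset.gcd_congr rfl
      intro i _
      exact (Nat.mul_div_cancel' (hdg.trans (hdvd i))).symm
    rw [this, Nat.mul_div_cancel_left _ hd0]
  -- F m = (N/m)! / ∏ (n i / m)!
  set F : ℕ → ℚ := fun m =>
    (Nat.factorial (N / m) : ℚ) / ∏ i, (Nat.factorial (n i / m) : ℚ) with hF
  have step : ∀ d ∈ g.divisors,
      ((N / d : ℕ) : ℚ) * Mword (fun i => n i / d)
        = ∑ e ∈ (g / d).divisors, ((ArithmeticFunction.moebius e : ℤ) : ℚ) * F (d * e) := by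
    intro d hd
    have hdg : d ∣ g := (Nat.mem_divisors.1 hd).1
    have hd0 : 0 < d := Nat.pos_of_ne_zero (by rintro rfl; exact hg0 (Nat.eq_zero_of_zero_dvd hdg))
    have hNd : N / d ≠ 0 := by
      have := Nat.le_of_dvd (by omega) (hdg.trans hgN)
      have := Nat.div_pos this hd0
      omega
    rw [Mword, hsum d hd, hgcd d hd]
    rw [← mul_assoc, mul_one_div, div_self (by exact_mod_cast hNd), one_mul]
    apply Finset.sum_congr rfl
    intro e _
    rw [hF]
    simp only [Nat.div_div_eq_div_mul]
    rw [mul_div_assoc]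
  rw [Finset.sum_congr rfl step, sum_divisors_div_eq g hg0, hNdef]
  have inner : ∀ m ∈ g.divisors,
      (∑ e ∈ m.divisors, ((ArithmeticFunction.moebius e : ℤ) : ℚ) * F ((m / e) * e))
        = (if m = 1 then 1 else 0) * F m := by
    intro m hm
    obtain ⟨hmg, -⟩ := Nat.mem_divisors.1 hm
    have hm0 : m ≠ 0 := fun h0 => hg0 (by rw [h0] at hmg; exact Nat.eq_zero_of_zero_dvd hmg)
    have : ∀ e ∈ m.divisors, ((ArithmeticFunction.moebius e : ℤ) : ℚ) * F ((m / e) * e)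
        = ((ArithmeticFunction.moebius e : ℤ) : ℚ) * F m := by
      intro e he
      rw [Nat.div_mul_cancel (Nat.mem_divisors.1 he).1]
    rw [Finset.sum_congr rfl this, ← Finset.sum_mul]
    congr 1
    calc (∑ e ∈ m.divisors, ((ArithmeticFunction.moebius e : ℤ) : ℚ))
        = ((∑ e ∈ m.divisors, (ArithmeticFunction.moebius e : ℤ) : ℤ) : ℚ) := by push_cast; rfl
      _ = _ := by rw [sum_moebius_divisors m hm0]; split <;> simp
  rw [Finset.sum_congr rfl inner]
  simp only [ite_mul, one_mul, zero_mul]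
  rw [Finset.sum_ite_eq' g.divisors 1 F, if_pos (Nat.one_mem_divisors.2 hg0)]
  simp [hF, hNdef]
end
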